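/- arXiv:2004.09490 — 7 statements merged into one kernel-verified Lean document; each statement's English description precedes it below -/
import Mathlib

section
/- Energy identity for the transport problem on a network (Theorem 2.2): Every classical solution u of the transport network problem on [0,T] with inflow boundary data g satisfies, for all t ∈ (0,T), d/dt ∑_{e∈E} a^e ∫₀^{ℓ^e} (u^e(x,t))² dx = ∑_{v∈V∂^in} b^{e(v)} (g^v(t))² − ∑_{v∈V∂^out} b^{e(v)} (u^{e(v)}(v,t))² − ∑_{v∈V₀} ∑_{e∈E^in(v)} b^e (u^e(v,t) − û^v(t))², where e(v) denotes the unique edge incident to the boundary vertex v and û^v(t) are the nodal values from the coupling conditions. In particular, the mixing at junctions generates dissipation. -/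
open Set Finset

/-- Signed incidence number `n^e(v)`: `-1` at the start vertex, `+1` at the end vertex,
`0` otherwise. -/
def inc {E V : Type} [DecidableEq V] (src tgt : E → V) (e : E) (v : V) : ℝ :=
  (if tgt e = v then (1 : ℝ) else 0) - (if src e = v then (1 : ℝ) else 0)

/-- Number of edges incident to the vertex `v`. -/
def edgeDeg {E V : Type} [Fintype E] [DecidableEq V] (src tgt : E → V) (v : V) : ℕ :=
  (Finset.univ.filter (fun e => src e = v ∨ tgt e = v)).card

/-- A classical solution of the transport problem on the network with edges `E`,
vertices `V`, edge lengths `ℓ`, coefficients `a`, `b`, time horizon `T`, initial data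
`u0` and inflow boundary data `g`.  The fields `ux`, `ut` are the spatial and temporal
derivatives of `u` and `uhat` are the nodal values (only relevant at vertices that are
not outflow boundary vertices). -/
structure TSol (E V : Type) [Fintype E] [Fintype V] [DecidableEq E] [DecidableEq V]
    (src tgt : E → V) (ℓ a b : E → ℝ) (T : ℝ)
    (u0 : E → ℝ → ℝ) (g : V → ℝ → ℝ) : Type where
  u : E → ℝ → ℝ → ℝ
  ux : E → ℝ → ℝ → ℝ
  ut : E → ℝ → ℝ → ℝ
  uhat : V → ℝ → ℝ
  cont_u : ∀ e, ContinuousOn (fun p : ℝ × ℝ => u e p.1 p.2) (Set.Icc 0 (ℓ e) ×ˢ Set.Icc 0 T)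
  cont_ux : ∀ e, ContinuousOn (fun p : ℝ × ℝ => ux e p.1 p.2) (Set.Icc 0 (ℓ e) ×ˢ Set.Icc 0 T)
  cont_ut : ∀ e, ContinuousOn (fun p : ℝ × ℝ => ut e p.1 p.2) (Set.Icc 0 (ℓ e) ×ˢ Set.Icc 0 T)
  hasDeriv_x : ∀ e, ∀ t ∈ Set.Icc (0 : ℝ) T, ∀ x ∈ Set.Icc (0 : ℝ) (ℓ e),
      HasDerivWithinAt (fun y => u e y t) (ux e x t) (Set.Icc 0 (ℓ e)) x
  hasDeriv_t : ∀ e, ∀ x ∈ Set.Icc (0 : ℝ) (ℓ e), ∀ t ∈ Set.Icc (0 : ℝ) T,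
      HasDerivWithinAt (fun s => u e x s) (ut e x t) (Set.Icc 0 T) t
  pde : ∀ e, ∀ x ∈ Set.Icc (0 : ℝ) (ℓ e), ∀ t ∈ Set.Icc (0 : ℝ) T,
      a e * ut e x t + b e * ux e x t = 0
  inflow_value : ∀ (e : E), ∀ t ∈ Set.Icc (0 : ℝ) T, u e 0 t = uhat (src e) t
  coupling : ∀ v : V, 2 ≤ edgeDeg src tgt v → ∀ t ∈ Set.Icc (0 : ℝ) T,
      ∑ e ∈ Finset.univ.filter (fun e => tgt e = v), b e * u e (ℓ e) t
        = (∑ e ∈ Finset.univ.filter (fun e => src e = v), b e) * uhat v t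
  bdry_in : ∀ v : V, edgeDeg src tgt v = 1 → (∃ e, src e = v) →
      ∀ t ∈ Set.Icc (0 : ℝ) T, uhat v t = g v t
  init : ∀ e, ∀ x ∈ Set.Icc (0 : ℝ) (ℓ e), u e x 0 = u0 e x


section EnergyAux
open Set

/-- Differentiation under the integral sign for one edge. -/
lemma edge_hasDerivAt (f ft : ℝ → ℝ → ℝ) (L T : ℝ) (hL : 0 < L)
    (hc : ContinuousOn (fun p : ℝ × ℝ => f p.1 p.2) (Icc 0 L ×ˢ Icc 0 T))
    (hct : ContinuousOn (fun p : ℝ × ℝ => ft p.1 p.2) (Icc 0 L ×ˢ Icc 0 T))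
    (hdt : ∀ x ∈ Icc (0:ℝ) L, ∀ t ∈ Icc (0:ℝ) T,
      HasDerivWithinAt (fun s => f x s) (ft x t) (Icc 0 T) t)
    (t : ℝ) (ht : t ∈ Ioo (0:ℝ) T) :
    HasDerivAt (fun s => ∫ x in (0:ℝ)..L, (f x s) ^ 2)
      (∫ x in (0:ℝ)..L, 2 * f x t * ft x t) t := by
  obtain ⟨ht0, htT⟩ := ht
  set ε : ℝ := min t (T - t) / 2 with hε
  have hε0 : 0 < ε := by
    have : 0 < min t (T - t) := lt_min ht0 (by linarith)
    rw [hε]; linarith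
  have hball : Metric.ball t ε ⊆ Ioo 0 T := by
    intro s hs
    rw [Metric.mem_ball, Real.dist_eq, abs_lt] at hs
    constructor
    · have : ε ≤ t / 2 := by
        rw [hε]; gcongr; exact min_le_left _ _
      linarith
    · have : ε ≤ (T - t) / 2 := by
        rw [hε]; gcongr; exact min_le_right _ _
      linarith
  have hIccS : Icc (t - ε) (t + ε) ⊆ Icc 0 T := by
    intro s hs
    have h1 : ε ≤ t / 2 := by rw [hε]; gcongr; exact min_le_left _ _
    have h2 : ε ≤ (T - t) / 2 := by rw [hε]; gcongr; exact min_le_right _ _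
    obtain ⟨a1, a2⟩ := hs
    constructor <;> linarith
  -- bound on the compact set
  have hK : IsCompact (Icc (0:ℝ) L ×ˢ Icc (t - ε) (t + ε)) :=
    (isCompact_Icc).prod isCompact_Icc
  have hsub : (Icc (0:ℝ) L ×ˢ Icc (t - ε) (t + ε)) ⊆ Icc 0 L ×ˢ Icc 0 T :=
    Set.prod_mono_right hIccS
  have hcF' : ContinuousOn (fun p : ℝ × ℝ => 2 * f p.1 p.2 * ft p.1 p.2)
      (Icc 0 L ×ˢ Icc 0 T) := ((continuousOn_const.mul hc).mul hct)
  obtain ⟨C, hC⟩ := hK.exists_bound_of_continuousOn (hcF'.mono hsub)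
  have huIoc : Set.uIoc (0:ℝ) L = Ioc 0 L := Set.uIoc_of_le hL.le
  have meas_slice : ∀ s ∈ Icc (0:ℝ) T, ContinuousOn (fun x => f x s) (Icc 0 L) := by
    intro s hs
    exact hc.comp (continuousOn_id.prodMk continuousOn_const)
      (fun x hx => Set.mk_mem_prod hx hs)
  have meas_slice_t : ∀ s ∈ Icc (0:ℝ) T, ContinuousOn (fun x => ft x s) (Icc 0 L) := by
    intro s hs
    exact hct.comp (continuousOn_id.prodMk continuousOn_const)
      (fun x hx => Set.mk_mem_prod hx hs)
  have httime : t ∈ Icc (0:ℝ) T := ⟨ht0.le, htT.le⟩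
  have main := intervalIntegral.hasDerivAt_integral_of_dominated_loc_of_deriv_le
    (F := fun s x => (f x s) ^ 2) (F' := fun s x => 2 * f x s * ft x s)
    (a := 0) (b := L) (x₀ := t) (bound := fun _ => |C|) (μ := MeasureTheory.volume) (Metric.ball_mem_nhds t hε0)
    ?_ ?_ ?_ ?_ ?_ ?_
  · exact main.2
  · -- eventual measurability
    filter_upwards [Ioo_mem_nhds ht0 htT] with s hs
    have : ContinuousOn (fun x => (f x s) ^ 2) (Ioc 0 L) :=
      ((meas_slice s ⟨hs.1.le, hs.2.le⟩).mono Ioc_subset_Icc_self).pow 2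
    rw [huIoc]
    exact this.aestronglyMeasurable measurableSet_Ioc
  · -- integrability of F t
    exact (((meas_slice t httime).pow 2).mono (by rw [uIcc_of_le hL.le])).intervalIntegrable
  · -- measurability of F' t
    rw [huIoc]
    exact ((((continuousOn_const.mul (meas_slice t httime)).mul
      (meas_slice_t t httime))).mono Ioc_subset_Icc_self).aestronglyMeasurable measurableSet_Ioc
  · -- bound
    refine MeasureTheory.ae_of_all _ (fun x hx s hs => ?_)
    rw [huIoc] at hx
    have hs' : s ∈ Icc (t - ε) (t + ε) := by
      rw [Metric.mem_ball, Real.dist_eq, abs_lt] at hs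
      exact ⟨by linarith [hs.1], by linarith [hs.2]⟩
    calc ‖2 * f x s * ft x s‖ ≤ C := hC (x, s) (Set.mk_mem_prod (Ioc_subset_Icc_self hx) hs')
    _ ≤ |C| := le_abs_self C
  · exact intervalIntegrable_const
  · -- differentiability
    refine MeasureTheory.ae_of_all _ (fun x hx s hs => ?_)
    rw [huIoc] at hx
    have hsIoo : s ∈ Ioo 0 T := hball hs
    have hx' : x ∈ Icc (0:ℝ) L := Ioc_subset_Icc_self hx
    have hd : HasDerivAt (fun s => f x s) (ft x s) s :=
      (hdt x hx' s ⟨hsIoo.1.le, hsIoo.2.le⟩).hasDerivAt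
        (Icc_mem_nhds hsIoo.1 hsIoo.2)
    have := hd.fun_pow 2
    simpa [mul_comm, mul_assoc, mul_left_comm] using this


lemma edge_ftc (f fx : ℝ → ℝ → ℝ) (L T : ℝ) (hL : 0 < L)
    (hc : ContinuousOn (fun p : ℝ × ℝ => f p.1 p.2) (Icc 0 L ×ˢ Icc 0 T))
    (hcx : ContinuousOn (fun p : ℝ × ℝ => fx p.1 p.2) (Icc 0 L ×ˢ Icc 0 T))
    (t : ℝ) (ht : t ∈ Icc (0:ℝ) T)
    (hdx : ∀ x ∈ Icc (0:ℝ) L, HasDerivWithinAt (fun y => f y t) (fx x t) (Icc 0 L) x) :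
    ∫ x in (0:ℝ)..L, 2 * f x t * fx x t = f L t ^ 2 - f 0 t ^ 2 := by
  have slice : ContinuousOn (fun x => f x t) (Icc 0 L) :=
    hc.comp (continuousOn_id.prodMk continuousOn_const) (fun x hx => Set.mk_mem_prod hx ht)
  have slicex : ContinuousOn (fun x => fx x t) (Icc 0 L) :=
    hcx.comp (continuousOn_id.prodMk continuousOn_const) (fun x hx => Set.mk_mem_prod hx ht)
  refine intervalIntegral.integral_eq_sub_of_hasDeriv_right_of_le hL.le
    (slice.pow 2) (fun x hx => ?_) ?_
  · have hd : HasDerivAt (fun y => f y t) (fx x t) x :=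
      (hdx x (Ioo_subset_Icc_self hx)).hasDerivAt (Icc_mem_nhds hx.1 hx.2)
    have := (hd.pow 2).hasDerivWithinAt (s := Ioi x)
    simpa [mul_comm, mul_assoc, mul_left_comm] using this
  · exact (((continuousOn_const.mul slice).mul slicex).mono
      (by rw [uIcc_of_le hL.le])).intervalIntegrable


lemma incident_singleton {E V : Type} [Fintype E] [DecidableEq E] [DecidableEq V]
    (src tgt : E → V) (eOf : V → E) (v : V) (hd : edgeDeg src tgt v = 1)
    (hin : src (eOf v) = v ∨ tgt (eOf v) = v) :
    Finset.univ.filter (fun e => src e = v ∨ tgt e = v) = {eOf v} := by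
  have hmem : eOf v ∈ Finset.univ.filter (fun e => src e = v ∨ tgt e = v) := by
    simp [hin]
  rw [Finset.eq_singleton_iff_unique_mem]
  refine ⟨hmem, fun x hx => ?_⟩
  exact Finset.card_le_one.mp (le_of_eq hd) x hx (eOf v) hmem

lemma energy_rearrange {E V : Type} [Fintype E] [Fintype V] [DecidableEq E] [DecidableEq V]
    (src tgt : E → V) (hne : ∀ e, src e ≠ tgt e) (b : E → ℝ)
    (hdeg : ∀ v : V, 1 ≤ edgeDeg src tgt v)
    (hflow : ∀ v : V, 2 ≤ edgeDeg src tgt v →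
      ∑ e ∈ Finset.univ.filter (fun e => tgt e = v), b e
        = ∑ e ∈ Finset.univ.filter (fun e => src e = v), b e)
    (U : E → ℝ) (H : V → ℝ) (G : V → ℝ)
    (coupling : ∀ v : V, 2 ≤ edgeDeg src tgt v →
      ∑ e ∈ Finset.univ.filter (fun e => tgt e = v), b e * U e
        = (∑ e ∈ Finset.univ.filter (fun e => src e = v), b e) * H v)
    (bdry : ∀ v : V, edgeDeg src tgt v = 1 → (∃ e, src e = v) → H v = G v)
    (eOf : V → E)
    (heOf : ∀ v : V, edgeDeg src tgt v = 1 → (src (eOf v) = v ∨ tgt (eOf v) = v)) :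
    ∑ e, b e * H (src e) ^ 2 - ∑ e, b e * U e ^ 2
      = ∑ v ∈ Finset.univ.filter (fun v : V => edgeDeg src tgt v = 1 ∧ src (eOf v) = v),
            b (eOf v) * (G v) ^ 2
        - ∑ v ∈ Finset.univ.filter (fun v : V => edgeDeg src tgt v = 1 ∧ tgt (eOf v) = v),
            b (eOf v) * (U (eOf v)) ^ 2
        - ∑ v ∈ Finset.univ.filter (fun v : V => 2 ≤ edgeDeg src tgt v),
            ∑ e ∈ Finset.univ.filter (fun e => tgt e = v), b e * (U e - H v) ^ 2 := by
  -- regroup edge sums by vertex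
  have h1 : ∑ e, b e * H (src e) ^ 2
      = ∑ v, ∑ e ∈ Finset.univ.filter (fun e => src e = v), b e * H v ^ 2 := by
    rw [← Finset.sum_fiberwise_of_maps_to (g := src) (t := Finset.univ)
      (fun e _ => Finset.mem_univ _) (fun e => b e * H (src e) ^ 2)]
    refine Finset.sum_congr rfl (fun v _ => Finset.sum_congr rfl (fun e he => ?_))
    rw [Finset.mem_filter] at he
    rw [he.2]
  have h2 : ∑ e, b e * U e ^ 2
      = ∑ v, ∑ e ∈ Finset.univ.filter (fun e => tgt e = v), b e * U e ^ 2 := by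
    rw [← Finset.sum_fiberwise_of_maps_to (g := tgt) (t := Finset.univ)
      (fun e _ => Finset.mem_univ _) (fun e => b e * U e ^ 2)]
  set F : V → ℝ := fun v =>
    (∑ e ∈ Finset.univ.filter (fun e => src e = v), b e * H v ^ 2)
      - ∑ e ∈ Finset.univ.filter (fun e => tgt e = v), b e * U e ^ 2 with hF
  have hD : ∑ e, b e * H (src e) ^ 2 - ∑ e, b e * U e ^ 2 = ∑ v, F v := by
    rw [h1, h2, ← Finset.sum_sub_distrib]
  rw [hD]
  -- split the vertex set
  have split1 : ∑ v, F v
      = ∑ v ∈ Finset.univ.filter (fun v => 2 ≤ edgeDeg src tgt v), F v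
        + ∑ v ∈ Finset.univ.filter (fun v => edgeDeg src tgt v = 1), F v := by
    rw [← Finset.sum_filter_add_sum_filter_not Finset.univ (fun v => 2 ≤ edgeDeg src tgt v) F]
    congr 1
    refine Finset.sum_congr ?_ (fun _ _ => rfl)
    apply Finset.filter_congr
    intro v _
    have := hdeg v
    constructor <;> (intro h; omega)
  have split2 : ∑ v ∈ Finset.univ.filter (fun v => edgeDeg src tgt v = 1), F v
      = ∑ v ∈ Finset.univ.filter
          (fun v : V => edgeDeg src tgt v = 1 ∧ src (eOf v) = v), F v
        + ∑ v ∈ Finset.univ.filter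
            (fun v : V => edgeDeg src tgt v = 1 ∧ tgt (eOf v) = v), F v := by
    rw [← Finset.sum_filter_add_sum_filter_not
      (Finset.univ.filter (fun v => edgeDeg src tgt v = 1)) (fun v => src (eOf v) = v) F,
      Finset.filter_filter, Finset.filter_filter]
    congr 1
    refine Finset.sum_congr ?_ (fun _ _ => rfl)
    apply Finset.filter_congr
    intro v _
    constructor
    · rintro ⟨hd, hns⟩
      exact ⟨hd, (heOf v hd).resolve_left hns⟩
    · rintro ⟨hd, hti⟩
      refine ⟨hd, fun hsi => hne (eOf v) ?_⟩
      rw [hsi, hti]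
  -- evaluate F on inflow boundary vertices
  have val1 : ∀ v ∈ Finset.univ.filter
      (fun v : V => edgeDeg src tgt v = 1 ∧ src (eOf v) = v),
      F v = b (eOf v) * (G v) ^ 2 := by
    intro v hv
    rw [Finset.mem_filter] at hv
    obtain ⟨_, hd, hs⟩ := hv
    have hinc := incident_singleton src tgt eOf v hd (Or.inl hs)
    have hsf : Finset.univ.filter (fun e => src e = v) = {eOf v} := by
      rw [Finset.eq_singleton_iff_unique_mem]
      refine ⟨by simp [hs], fun x hx => ?_⟩
      rw [Finset.mem_filter] at hx
      have : x ∈ Finset.univ.filter (fun e => src e = v ∨ tgt e = v) := by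
        simp [hx.2]
      rw [hinc, Finset.mem_singleton] at this
      exact this
    have htf : Finset.univ.filter (fun e : E => tgt e = v) = ∅ := by
      rw [Finset.eq_empty_iff_forall_notMem]
      intro x hx
      rw [Finset.mem_filter] at hx
      have : x ∈ Finset.univ.filter (fun e => src e = v ∨ tgt e = v) := by
        simp [hx.2]
      rw [hinc, Finset.mem_singleton] at this
      subst this
      exact hne (eOf v) (by rw [hs, hx.2])
    rw [hF]
    simp only [hsf, htf, Finset.sum_singleton, Finset.sum_empty, sub_zero]
    rw [bdry v hd ⟨eOf v, hs⟩]
  -- evaluate F on outflow boundary vertices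
  have val2 : ∀ v ∈ Finset.univ.filter
      (fun v : V => edgeDeg src tgt v = 1 ∧ tgt (eOf v) = v),
      F v = -(b (eOf v) * (U (eOf v)) ^ 2) := by
    intro v hv
    rw [Finset.mem_filter] at hv
    obtain ⟨_, hd, hti⟩ := hv
    have hinc := incident_singleton src tgt eOf v hd (Or.inr hti)
    have htf : Finset.univ.filter (fun e => tgt e = v) = {eOf v} := by
      rw [Finset.eq_singleton_iff_unique_mem]
      refine ⟨by simp [hti], fun x hx => ?_⟩
      rw [Finset.mem_filter] at hx
      have : x ∈ Finset.univ.filter (fun e => src e = v ∨ tgt e = v) := by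
        simp [hx.2]
      rw [hinc, Finset.mem_singleton] at this
      exact this
    have hsf : Finset.univ.filter (fun e : E => src e = v) = ∅ := by
      rw [Finset.eq_empty_iff_forall_notMem]
      intro x hx
      rw [Finset.mem_filter] at hx
      have : x ∈ Finset.univ.filter (fun e => src e = v ∨ tgt e = v) := by
        simp [hx.2]
      rw [hinc, Finset.mem_singleton] at this
      subst this
      exact hne (eOf v) (by rw [hti, hx.2])
    rw [hF]
    simp [hsf, htf]
  -- evaluate F on inner vertices
  have val3 : ∀ v ∈ Finset.univ.filter (fun v : V => 2 ≤ edgeDeg src tgt v),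
      F v = -(∑ e ∈ Finset.univ.filter (fun e => tgt e = v), b e * (U e - H v) ^ 2) := by
    intro v hv
    rw [Finset.mem_filter] at hv
    have hd := hv.2
    have hexp : ∑ e ∈ Finset.univ.filter (fun e => tgt e = v), b e * (U e - H v) ^ 2
        = ∑ e ∈ Finset.univ.filter (fun e => tgt e = v), b e * U e ^ 2
          - 2 * H v * ∑ e ∈ Finset.univ.filter (fun e => tgt e = v), b e * U e
          + H v ^ 2 * ∑ e ∈ Finset.univ.filter (fun e => tgt e = v), b e := by
      rw [Finset.mul_sum, Finset.mul_sum, ← Finset.sum_sub_distrib, ← Finset.sum_add_distrib]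
      exact Finset.sum_congr rfl (fun e _ => by ring)
    rw [hF]
    simp only
    rw [hexp, coupling v hd, hflow v hd, ← Finset.sum_mul]
    ring
  rw [split1, split2, Finset.sum_congr rfl val1, Finset.sum_congr rfl val2,
    Finset.sum_congr rfl val3, Finset.sum_neg_distrib, Finset.sum_neg_distrib]
  ring

end EnergyAux
/-- **Theorem 2.2 (energy identity for the transport problem on a network).**
Every classical solution satisfies, for all `t ∈ (0,T)`,
`d/dt ∑ₑ aᵉ ∫₀^{ℓᵉ} (uᵉ)² dx = ∑_{v ∈ V∂ⁱⁿ} bᵉ (gᵛ)² − ∑_{v ∈ V∂ᵒᵘᵗ} bᵉ (uᵉ(v))²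
  − ∑_{v ∈ V₀} ∑_{e ∈ Eⁱⁿ(v)} bᵉ (uᵉ(v) − ûᵛ)²`,
where `eOf v` is the unique edge incident to the boundary vertex `v`; in particular the
mixing at the junctions generates dissipation. -/
theorem transport_energy_identity
    (E V : Type) [Fintype E] [Fintype V] [DecidableEq E] [DecidableEq V]
    (src tgt : E → V) (hne : ∀ e, src e ≠ tgt e)
    (ℓ a b : E → ℝ) (T : ℝ) (hT : 0 < T)
    (hℓ : ∀ e, 0 < ℓ e) (ha : ∀ e, 0 < a e) (hb : ∀ e, 0 < b e)
    (hdeg : ∀ v : V, 1 ≤ edgeDeg src tgt v)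
    (hinout : ∀ v : V, 2 ≤ edgeDeg src tgt v → (∃ e, tgt e = v) ∧ (∃ e, src e = v))
    (hflow : ∀ v : V, 2 ≤ edgeDeg src tgt v →
      ∑ e ∈ Finset.univ.filter (fun e => tgt e = v), b e
        = ∑ e ∈ Finset.univ.filter (fun e => src e = v), b e)
    (u0 : E → ℝ → ℝ) (g : V → ℝ → ℝ)
    (sol : TSol E V src tgt ℓ a b T u0 g)
    (eOf : V → E)
    (heOf : ∀ v : V, edgeDeg src tgt v = 1 → (src (eOf v) = v ∨ tgt (eOf v) = v)) :
    ∀ t ∈ Set.Ioo (0 : ℝ) T,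
      HasDerivAt (fun s => ∑ e, a e * ∫ x in (0 : ℝ)..(ℓ e), (sol.u e x s) ^ 2)
        (∑ v ∈ Finset.univ.filter
            (fun v : V => edgeDeg src tgt v = 1 ∧ src (eOf v) = v),
            b (eOf v) * (g v t) ^ 2
          - ∑ v ∈ Finset.univ.filter
              (fun v : V => edgeDeg src tgt v = 1 ∧ tgt (eOf v) = v),
              b (eOf v) * (sol.u (eOf v) (ℓ (eOf v)) t) ^ 2
          - ∑ v ∈ Finset.univ.filter (fun v : V => 2 ≤ edgeDeg src tgt v),
              ∑ e ∈ Finset.univ.filter (fun e => tgt e = v),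
                b e * (sol.u e (ℓ e) t - sol.uhat v t) ^ 2) t := by
  intro t ht
  have htIcc : t ∈ Set.Icc (0:ℝ) T := ⟨ht.1.le, ht.2.le⟩
  have hedge : ∀ e : E,
      HasDerivAt (fun s => a e * ∫ x in (0:ℝ)..(ℓ e), (sol.u e x s) ^ 2)
        (b e * (sol.uhat (src e) t) ^ 2 - b e * (sol.u e (ℓ e) t) ^ 2) t := by
    intro e
    have hD := edge_hasDerivAt (sol.u e) (sol.ut e) (ℓ e) T (hℓ e)
      (sol.cont_u e) (sol.cont_ut e) (sol.hasDeriv_t e) t ht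
    have hval : a e * (∫ x in (0:ℝ)..(ℓ e), 2 * sol.u e x t * sol.ut e x t)
        = b e * (sol.uhat (src e) t) ^ 2 - b e * (sol.u e (ℓ e) t) ^ 2 := by
      have hcong : Set.EqOn (fun x => a e * (2 * sol.u e x t * sol.ut e x t))
          (fun x => -(b e * (2 * sol.u e x t * sol.ux e x t)))
          (Set.uIcc (0:ℝ) (ℓ e)) := by
        intro x hx
        rw [Set.uIcc_of_le (hℓ e).le] at hx
        have hp := sol.pde e x hx t htIcc
        simp only
        linear_combination (2 * sol.u e x t) * hp
      calc a e * ∫ x in (0:ℝ)..(ℓ e), 2 * sol.u e x t * sol.ut e x t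
          = ∫ x in (0:ℝ)..(ℓ e), a e * (2 * sol.u e x t * sol.ut e x t) := by
            rw [intervalIntegral.integral_const_mul]
        _ = ∫ x in (0:ℝ)..(ℓ e), -(b e * (2 * sol.u e x t * sol.ux e x t)) :=
            intervalIntegral.integral_congr hcong
        _ = -(b e * ∫ x in (0:ℝ)..(ℓ e), 2 * sol.u e x t * sol.ux e x t) := by
            rw [intervalIntegral.integral_neg, intervalIntegral.integral_const_mul]
        _ = -(b e * (sol.u e (ℓ e) t ^ 2 - sol.u e 0 t ^ 2)) := by
            rw [edge_ftc (sol.u e) (sol.ux e) (ℓ e) T (hℓ e) (sol.cont_u e)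
              (sol.cont_ux e) t htIcc (sol.hasDeriv_x e t htIcc)]
        _ = b e * (sol.u e 0 t) ^ 2 - b e * (sol.u e (ℓ e) t) ^ 2 := by ring
        _ = b e * (sol.uhat (src e) t) ^ 2 - b e * (sol.u e (ℓ e) t) ^ 2 := by
            rw [sol.inflow_value e t htIcc]
    have := hD.const_mul (a e)
    rwa [hval] at this
  have hsum := HasDerivAt.fun_sum (fun e (_ : e ∈ Finset.univ) => hedge e)
  convert hsum using 1
  · rfl
  · rfl
  rw [Finset.sum_sub_distrib]
  exact (energy_rearrange src tgt hne b hdeg hflow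
    (fun e => sol.u e (ℓ e) t) (fun v => sol.uhat v t) (fun v => g v t)
    (fun v hv => sol.coupling v hv t htIcc)
    (fun v hd hex => sol.bdry_in v hd hex t htIcc) eOf heOf).symm
end

section
/- Weak maximum principle on networks (Lemma 3.1): Let u = (u^e) be a family of functions u^e : [0,ℓ^e]×[0,T] → ℝ, continuous, continuously differentiable in t and twice continuously differentiable in x with derivatives extending continuously to the closed edge, which for all 0 < t < T satisfies: (a) a^e ∂_t u^e + b^e ∂_x u^e − ε^e ∂_xx u^e ≥ 0 on each edge e; (b) u is continuous across vertices, i.e. for each vertex v there is û^v(t) with u^e(v,t) = û^v(t) for all e ∈ E(v); (c) ∑_{e∈E(v)} ε^e ∂_x u^e(v,t) n^e(v) = 0 at every inner vertex v ∈ V₀; (d) u(v,t) ≥ 0 at every boundary vertex v ∈ V∂; and (e) u^e(x,0) ≥ 0 for all x ∈ [0,ℓ^e] and all e ∈ E. Then u^e(x,t) ≥ 0 for all x ∈ [0,ℓ^e], all e ∈ E, and all t ∈ [0,T]. -/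
open Set Finset

/-- Coordinate of vertex `v` on edge `e`: `0` at the start vertex, `ℓ e` at the end vertex. -/
def endCoord {E V : Type} [DecidableEq V] (src : E → V) (ℓ : E → ℝ) (e : E) (v : V) : ℝ :=
  if src e = v then 0 else ℓ e

section WmpHelpers
open Filter Topology

/-- One-sided derivative at a right endpoint, with values bounded below on the left. -/
lemma wmp_slope_left_le {f : ℝ → ℝ} {f' A c K : ℝ} (hac : A < c)
    (hd : HasDerivWithinAt f f' (Set.Icc A c) c)
    (hK : ∀ t ∈ Set.Ico A c, K * (c - t) ≤ f t - f c) : f' ≤ -K := by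
  rw [hasDerivWithinAt_iff_tendsto_slope, Set.Icc_sdiff_right] at hd
  have : NeBot (𝓝[Set.Ico A c] c) := right_nhdsWithin_Ico_neBot hac
  refine le_of_tendsto hd ?_
  filter_upwards [eventually_mem_nhdsWithin] with x hx
  have hxc : x - c < 0 := by linarith [hx.2]
  have := hK x hx
  rw [slope_def_field, div_le_iff_of_neg (by linarith : x - c < 0)]
  ring_nf
  nlinarith [hK x hx]

lemma wmp_slope_right_ge {f : ℝ → ℝ} {f' c B : ℝ} (hcb : c < B)
    (hd : HasDerivWithinAt f f' (Set.Icc c B) c)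
    (h : ∀ t ∈ Set.Ioc c B, f c ≤ f t) : 0 ≤ f' := by
  rw [hasDerivWithinAt_iff_tendsto_slope, Set.Icc_diff_left] at hd
  have : NeBot (𝓝[Set.Ioc c B] c) := left_nhdsWithin_Ioc_neBot hcb
  refine ge_of_tendsto hd ?_
  filter_upwards [eventually_mem_nhdsWithin] with x hx
  rw [slope_def_field]
  have h1 : 0 < x - c := by linarith [hx.1]
  have h2 := h x hx
  exact div_nonneg (by linarith) (by linarith)

/-- Second derivative nonneg at one-sided (left endpoint) minimum with vanishing first
derivative. -/
lemma wmp_second_right {f g : ℝ → ℝ} {A B c b G : ℝ} (hAc : A ≤ c) (hcb : c < b) (hbB : b ≤ B)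
    (hf : ∀ x ∈ Set.Icc A B, HasDerivWithinAt f (g x) (Set.Icc A B) x)
    (hg : HasDerivWithinAt g G (Set.Icc A B) c)
    (hg0 : g c = 0)
    (hmin : ∀ x ∈ Set.Icc c b, f c ≤ f x) : 0 ≤ G := by
  by_contra hG
  push_neg at hG
  have hcB : c ∈ Set.Icc A B := ⟨hAc, le_trans hcb.le hbB⟩
  have hg' : HasDerivWithinAt g G (Set.Icc c b) c :=
    hg.mono (Set.Icc_subset_Icc hAc hbB)
  rw [hasDerivWithinAt_iff_tendsto_slope, Set.Icc_diff_left] at hg'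
  have hne : NeBot (𝓝[Set.Ioc c b] c) := left_nhdsWithin_Ioc_neBot hcb
  have hev : ∀ᶠ x in 𝓝[Set.Ioc c b] c, slope g c x < 0 := hg'.eventually_lt_const hG
  rw [eventually_nhdsWithin_iff] at hev
  rw [Metric.eventually_nhds_iff] at hev
  obtain ⟨ε, hε, hball⟩ := hev
  set d : ℝ := min b (c + ε / 2) with hd
  have hcd : c < d := lt_min hcb (by linarith)
  have hdb : d ≤ b := min_le_left _ _
  have hgneg : ∀ x ∈ Set.Ioc c d, g x < 0 := by
    intro x hx
    have hx1 : x ∈ Set.Ioc c b := ⟨hx.1, le_trans hx.2 hdb⟩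
    have hx2 : dist x c < ε := by
      rw [Real.dist_eq, abs_of_pos (by linarith [hx.1])]
      have : x ≤ c + ε / 2 := le_trans hx.2 (min_le_right _ _)
      linarith
    have := hball hx2 hx1
    rw [slope_def_field, hg0, sub_zero] at this
    have hxc : 0 < x - c := by linarith [hx.1]
    have := mul_neg_of_neg_of_pos this hxc
    rwa [div_mul_cancel₀ _ (ne_of_gt hxc)] at this
  have hcont0 : ContinuousOn f (Set.Icc A B) := fun x hx => (hf x hx).continuousWithinAt
  have hcont : ContinuousOn f (Set.Icc c d) :=
    hcont0.mono (Set.Icc_subset_Icc hAc (hdb.trans hbB))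
  have hderiv : ∀ x ∈ Set.Ioo c d, HasDerivAt f (g x) x := by
    intro x hx
    have hxAB : x ∈ Set.Icc A B := ⟨le_trans hAc hx.1.le, le_trans hx.2.le (le_trans hdb hbB)⟩
    exact (hf x hxAB).hasDerivAt (Icc_mem_nhds (lt_of_le_of_lt hAc hx.1)
      (lt_of_lt_of_le hx.2 (le_trans hdb hbB)))
  obtain ⟨ξ, hξ, hslope⟩ := exists_hasDerivAt_eq_slope f g hcd hcont hderiv
  have h1 : g ξ < 0 := hgneg ξ ⟨hξ.1, hξ.2.le⟩
  have h2 : f c ≤ f d := hmin d ⟨hcd.le, hdb⟩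
  rw [hslope] at h1
  have hdc : 0 < d - c := by linarith
  have := mul_neg_of_neg_of_pos h1 hdc
  rw [div_mul_cancel₀ _ (ne_of_gt hdc)] at this
  linarith

/-- Second derivative nonneg at one-sided (right endpoint) minimum with vanishing first
derivative. -/
lemma wmp_second_left {f g : ℝ → ℝ} {A B c b G : ℝ} (hAb : A ≤ b) (hbc : b < c) (hcB : c ≤ B)
    (hf : ∀ x ∈ Set.Icc A B, HasDerivWithinAt f (g x) (Set.Icc A B) x)
    (hg : HasDerivWithinAt g G (Set.Icc A B) c)
    (hg0 : g c = 0)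
    (hmin : ∀ x ∈ Set.Icc b c, f c ≤ f x) : 0 ≤ G := by
  by_contra hG
  push_neg at hG
  have hg' : HasDerivWithinAt g G (Set.Icc b c) c :=
    hg.mono (Set.Icc_subset_Icc hAb hcB)
  rw [hasDerivWithinAt_iff_tendsto_slope, Set.Icc_sdiff_right] at hg'
  have hne : NeBot (𝓝[Set.Ico b c] c) := right_nhdsWithin_Ico_neBot hbc
  have hev : ∀ᶠ x in 𝓝[Set.Ico b c] c, slope g c x < 0 := hg'.eventually_lt_const hG
  rw [eventually_nhdsWithin_iff, Metric.eventually_nhds_iff] at hev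
  obtain ⟨ε, hε, hball⟩ := hev
  set d : ℝ := max b (c - ε / 2) with hd
  have hdc : d < c := max_lt hbc (by linarith)
  have hbd : b ≤ d := le_max_left _ _
  have hgpos : ∀ x ∈ Set.Ico d c, 0 < g x := by
    intro x hx
    have hx1 : x ∈ Set.Ico b c := ⟨le_trans hbd hx.1, hx.2⟩
    have hx2 : dist x c < ε := by
      rw [Real.dist_eq, abs_of_neg (by linarith [hx.2])]
      have : c - ε / 2 ≤ x := le_trans (le_max_right _ _) hx.1
      linarith
    have := hball hx2 hx1
    rw [slope_def_field, hg0, sub_zero] at this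
    have hxc : x - c < 0 := by linarith [hx.2]
    have := mul_pos_of_neg_of_neg this hxc
    rwa [div_mul_cancel₀ _ (ne_of_lt hxc)] at this
  have hcont0 : ContinuousOn f (Set.Icc A B) := fun x hx => (hf x hx).continuousWithinAt
  have hcont : ContinuousOn f (Set.Icc d c) :=
    hcont0.mono (Set.Icc_subset_Icc (hAb.trans hbd) hcB)
  have hderiv : ∀ x ∈ Set.Ioo d c, HasDerivAt f (g x) x := by
    intro x hx
    have hxAB : x ∈ Set.Icc A B := ⟨le_trans (hAb.trans hbd) hx.1.le, le_trans hx.2.le hcB⟩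
    exact (hf x hxAB).hasDerivAt (Icc_mem_nhds (lt_of_le_of_lt (hAb.trans hbd) hx.1)
      (lt_of_lt_of_le hx.2 hcB))
  obtain ⟨ξ, hξ, hslope⟩ := exists_hasDerivAt_eq_slope f g hdc hcont hderiv
  have h1 : 0 < g ξ := hgpos ξ ⟨hξ.1.le, hξ.2⟩
  have h2 : f c ≤ f d := hmin d ⟨hbd, hdc.le⟩
  rw [hslope] at h1
  have hdc' : 0 < c - d := by linarith
  have := mul_pos h1 hdc'
  rw [div_mul_cancel₀ _ (ne_of_gt hdc')] at this
  linarith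

end WmpHelpers

open Filter Topology in

/-- **Lemma 3.1 (weak maximum principle on networks).**  If a family `u = (uᵉ)` of
sufficiently smooth functions satisfies the differential inequality
`aᵉ ∂ₜuᵉ + bᵉ ∂ₓuᵉ − εᵉ ∂ₓₓuᵉ ≥ 0` on every edge, is continuous across vertices,
satisfies `∑_{e ∈ E(v)} εᵉ ∂ₓuᵉ(v) nᵉ(v) = 0` at inner vertices, is nonnegative at the
boundary vertices, and has nonnegative initial values, then `u ≥ 0` on the whole network
for all `t ∈ [0,T]`. -/
theorem weak_maximum_principle
    (E V : Type) [Fintype E] [Fintype V] [DecidableEq E] [DecidableEq V]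
    (src tgt : E → V) (hne : ∀ e, src e ≠ tgt e)
    (ℓ a b eps : E → ℝ) (T : ℝ) (hT : 0 < T)
    (hℓ : ∀ e, 0 < ℓ e) (ha : ∀ e, 0 < a e) (hb : ∀ e, 0 < b e) (heps : ∀ e, 0 < eps e)
    (hdeg : ∀ v : V, 1 ≤ edgeDeg src tgt v)
    (hflow : ∀ v : V, 2 ≤ edgeDeg src tgt v → ∑ e, b e * inc src tgt e v = 0)
    (u ux uxx ut : E → ℝ → ℝ → ℝ) (uhat : V → ℝ → ℝ)
    (cont_u : ∀ e, ContinuousOn (fun p : ℝ × ℝ => u e p.1 p.2)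
      (Set.Icc 0 (ℓ e) ×ˢ Set.Icc 0 T))
    (cont_ux : ∀ e, ContinuousOn (fun p : ℝ × ℝ => ux e p.1 p.2)
      (Set.Icc 0 (ℓ e) ×ˢ Set.Icc 0 T))
    (cont_uxx : ∀ e, ContinuousOn (fun p : ℝ × ℝ => uxx e p.1 p.2)
      (Set.Icc 0 (ℓ e) ×ˢ Set.Icc 0 T))
    (cont_ut : ∀ e, ContinuousOn (fun p : ℝ × ℝ => ut e p.1 p.2)
      (Set.Icc 0 (ℓ e) ×ˢ Set.Icc 0 T))
    (hasDeriv_x : ∀ e, ∀ t ∈ Set.Icc (0 : ℝ) T, ∀ x ∈ Set.Icc (0 : ℝ) (ℓ e),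
      HasDerivWithinAt (fun y => u e y t) (ux e x t) (Set.Icc 0 (ℓ e)) x)
    (hasDeriv_xx : ∀ e, ∀ t ∈ Set.Icc (0 : ℝ) T, ∀ x ∈ Set.Icc (0 : ℝ) (ℓ e),
      HasDerivWithinAt (fun y => ux e y t) (uxx e x t) (Set.Icc 0 (ℓ e)) x)
    (hasDeriv_t : ∀ e, ∀ x ∈ Set.Icc (0 : ℝ) (ℓ e), ∀ t ∈ Set.Icc (0 : ℝ) T,
      HasDerivWithinAt (fun s => u e x s) (ut e x t) (Set.Icc 0 T) t)
    (hineq : ∀ e, ∀ x ∈ Set.Icc (0 : ℝ) (ℓ e), ∀ t ∈ Set.Ioo (0 : ℝ) T,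
      0 ≤ a e * ut e x t + b e * ux e x t - eps e * uxx e x t)
    (hcont_vertex : ∀ (v : V) (e : E), (src e = v ∨ tgt e = v) → ∀ t ∈ Set.Ioo (0 : ℝ) T,
      u e (endCoord src ℓ e v) t = uhat v t)
    (hcoupling : ∀ v : V, 2 ≤ edgeDeg src tgt v → ∀ t ∈ Set.Ioo (0 : ℝ) T,
      ∑ e, eps e * ux e (endCoord src ℓ e v) t * inc src tgt e v = 0)
    (hbdry : ∀ v : V, edgeDeg src tgt v = 1 → ∀ t ∈ Set.Ioo (0 : ℝ) T, 0 ≤ uhat v t)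
    (hinit : ∀ e, ∀ x ∈ Set.Icc (0 : ℝ) (ℓ e), 0 ≤ u e x 0) :
    ∀ e, ∀ x ∈ Set.Icc (0 : ℝ) (ℓ e), ∀ t ∈ Set.Icc (0 : ℝ) T, 0 ≤ u e x t := by
  -- Main claim: for every `δ > 0` and `T' < T`, `u + δ t ≥ 0` on the network up to time `T'`.
  have key : ∀ δ : ℝ, 0 < δ → ∀ T' : ℝ, 0 < T' → T' < T →
      ∀ e, ∀ x ∈ Set.Icc (0:ℝ) (ℓ e), ∀ t ∈ Set.Icc (0:ℝ) T', 0 ≤ u e x t + δ * t := by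
    intro δ hδ T' hT'0 hT'T e₁ x₁ hx₁ t₁ ht₁
    by_contra hbad
    push_neg at hbad
    have hTsub : Set.Icc (0:ℝ) T' ⊆ Set.Icc 0 T := Set.Icc_subset_Icc le_rfl hT'T.le
    -- global minimum of `w := u + δ t` over the compact network × [0,T']
    obtain ⟨p, hp, hpmin⟩ : ∃ p : E → ℝ × ℝ,
        (∀ e, p e ∈ Set.Icc 0 (ℓ e) ×ˢ Set.Icc (0:ℝ) T') ∧
        ∀ e, ∀ q ∈ Set.Icc 0 (ℓ e) ×ˢ Set.Icc (0:ℝ) T',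
          u e (p e).1 (p e).2 + δ * (p e).2 ≤ u e q.1 q.2 + δ * q.2 := by
      have h : ∀ e : E, ∃ q ∈ Set.Icc 0 (ℓ e) ×ˢ Set.Icc (0:ℝ) T',
          IsMinOn (fun q : ℝ × ℝ => u e q.1 q.2 + δ * q.2)
            (Set.Icc 0 (ℓ e) ×ˢ Set.Icc (0:ℝ) T') q := by
        intro e
        refine (isCompact_Icc.prod isCompact_Icc).exists_isMinOn
          ⟨(0,0), ⟨⟨le_rfl, (hℓ e).le⟩, ⟨le_rfl, hT'0.le⟩⟩⟩ ?_
        exact ((cont_u e).mono (Set.prod_mono Set.Subset.rfl hTsub)).add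
          ((continuous_const.mul continuous_snd).continuousOn)
      choose p hp hmin using h
      exact ⟨p, hp, fun e q hq => hmin e hq⟩
    obtain ⟨e0, -, he0⟩ := Finset.exists_min_image Finset.univ
      (fun e => u e (p e).1 (p e).2 + δ * (p e).2) ⟨e₁, Finset.mem_univ e₁⟩
    set x0 : ℝ := (p e0).1 with hx0def
    set t0 : ℝ := (p e0).2 with ht0def
    set m : ℝ := u e0 x0 t0 + δ * t0 with hm
    have hglob : ∀ e, ∀ xq ∈ Set.Icc 0 (ℓ e), ∀ tq ∈ Set.Icc (0:ℝ) T',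
        m ≤ u e xq tq + δ * tq := fun e xq hxq tq htq =>
      le_trans (he0 e (Finset.mem_univ e)) (hpmin e (xq, tq) ⟨hxq, htq⟩)
    have hx0 : x0 ∈ Set.Icc 0 (ℓ e0) := (hp e0).1
    have ht0 : t0 ∈ Set.Icc (0:ℝ) T' := (hp e0).2
    have hmneg : m < 0 := lt_of_le_of_lt (hglob e₁ x₁ hx₁ t₁ ht₁) hbad
    -- t0 > 0
    have ht0pos : 0 < t0 := by
      rcases eq_or_lt_of_le ht0.1 with h0 | h0
      · exfalso
        have := hinit e0 x0 hx0
        rw [hm, ← h0] at hmneg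
        simp at hmneg
        linarith
      · exact h0
    have ht0T : t0 ∈ Set.Ioo (0:ℝ) T := ⟨ht0pos, lt_of_le_of_lt ht0.2 hT'T⟩
    have ht0Icc : t0 ∈ Set.Icc (0:ℝ) T := ⟨ht0pos.le, ht0T.2.le⟩
    -- time derivative bound
    have hut : ut e0 x0 t0 ≤ -δ := by
      refine wmp_slope_left_le (f := fun s => u e0 x0 s) ht0pos
        ((hasDeriv_t e0 x0 hx0 t0 ht0Icc).mono
          (Set.Icc_subset_Icc le_rfl ht0T.2.le)) ?_
      intro s hs
      have := hglob e0 x0 hx0 s ⟨hs.1, le_trans hs.2.le ht0.2⟩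
      rw [hm] at this
      linarith
    -- x-direction: first derivative vanishes, second derivative nonneg
    obtain ⟨hux, huxx⟩ : ux e0 x0 t0 = 0 ∧ 0 ≤ uxx e0 x0 t0 := by
      have hminx' : ∀ e, ∀ y ∈ Set.Icc 0 (ℓ e), u e0 x0 t0 ≤ u e y t0 := by
        intro e y hy
        have := hglob e y hy t0 ht0
        rw [hm] at this
        linarith
      have hminx : ∀ y ∈ Set.Icc 0 (ℓ e0), u e0 x0 t0 ≤ u e0 y t0 :=
        fun y hy => hminx' e0 y hy
      rcases eq_or_lt_of_le hx0.1 with h0 | h0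
      · -- x0 = 0 : vertex  v = src e0
        have hx0eq : x0 = 0 := h0.symm
        set v : V := src e0 with hv
        have hvc : endCoord src ℓ e0 v = x0 := by simp [endCoord, hx0eq, hv]
        have hincident : src e0 = v ∨ tgt e0 = v := Or.inl rfl
        have huv : u e0 x0 t0 = uhat v t0 := by
          rw [← hvc]; exact hcont_vertex v e0 hincident t0 ht0T
        rcases eq_or_lt_of_le (hdeg v) with hdv | hdv
        · -- boundary vertex
          exfalso
          have := hbdry v hdv.symm t0 ht0T
          rw [← huv] at this
          rw [hm] at hmneg
          nlinarith
        · -- inner vertex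
          have hd2 : 2 ≤ edgeDeg src tgt v := hdv
          have hsum := hcoupling v hd2 t0 ht0T
          have hterm : ∀ e ∈ Finset.univ,
              eps e * ux e (endCoord src ℓ e v) t0 * inc src tgt e v ≤ 0 := by
            intro e _
            by_cases hs : src e = v
            · have htg : ¬ tgt e = v := fun h => hne e (hs.trans h.symm)
              have hend : endCoord src ℓ e v = 0 := by simp [endCoord, hs]
              have hvalue : u e 0 t0 = u e0 x0 t0 := by
                have := hcont_vertex v e (Or.inl hs) t0 ht0T
                rw [hend] at this
                rw [this, huv]
              have hpos : 0 ≤ ux e 0 t0 := by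
                refine wmp_slope_right_ge (hℓ e)
                  (hasDeriv_x e t0 ht0Icc 0 ⟨le_rfl, (hℓ e).le⟩) ?_
                intro y hy
                rw [hvalue]
                exact hminx' e y ⟨hy.1.le, hy.2⟩
              rw [hend]
              have hinc : inc src tgt e v = -1 := by simp [inc, hs, htg]
              rw [hinc]
              nlinarith [heps e]
            · by_cases htg : tgt e = v
              · have hend : endCoord src ℓ e v = ℓ e := by simp [endCoord, hs]
                have hvalue : u e (ℓ e) t0 = u e0 x0 t0 := by
                  have := hcont_vertex v e (Or.inr htg) t0 ht0T
                  rw [hend] at this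
                  rw [this, huv]
                have hneg : ux e (ℓ e) t0 ≤ 0 := by
                  have := wmp_slope_left_le (K := (0:ℝ)) (hℓ e)
                    (hasDeriv_x e t0 ht0Icc (ℓ e) ⟨(hℓ e).le, le_rfl⟩) ?_
                  · linarith [this]
                  · intro y hy
                    rw [hvalue]
                    have := hminx' e y ⟨hy.1, hy.2.le⟩
                    linarith
                rw [hend]
                have hinc : inc src tgt e v = 1 := by simp [inc, hs, htg]
                rw [hinc]
                nlinarith [heps e]
              · have hinc : inc src tgt e v = 0 := by simp [inc, hs, htg]
                rw [hinc]
                simp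
          have hall := (Finset.sum_eq_zero_iff_of_nonpos hterm).1 hsum
          have he00 := hall e0 (Finset.mem_univ e0)
          rw [hvc] at he00
          have hince0 : inc src tgt e0 v = -1 := by
            simp [inc, hv, (hne e0).symm]
          rw [hince0] at he00
          have hux0 : ux e0 x0 t0 = 0 := by
            have := heps e0
            nlinarith [he00]
          refine ⟨hux0, ?_⟩
          refine wmp_second_right (A := 0) (B := ℓ e0) (b := ℓ e0)
            (f := fun y => u e0 y t0) (g := fun y => ux e0 y t0)
            hx0.1 (hx0eq ▸ hℓ e0) le_rfl
            (fun y hy => hasDeriv_x e0 t0 ht0Icc y hy)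
            (hasDeriv_xx e0 t0 ht0Icc x0 hx0) hux0 ?_
          intro y hy
          exact hminx y ⟨le_trans hx0.1 hy.1, hy.2⟩
      · rcases eq_or_lt_of_le hx0.2 with hℓ0 | hℓ0
        · -- x0 = ℓ e0 : vertex v = tgt e0
          set v : V := tgt e0 with hv
          have hsne : ¬ src e0 = v := fun h => hne e0 h
          have hvc : endCoord src ℓ e0 v = x0 := by simp [endCoord, hsne, hℓ0]
          have hincident : src e0 = v ∨ tgt e0 = v := Or.inr rfl
          have huv : u e0 x0 t0 = uhat v t0 := by
            rw [← hvc]; exact hcont_vertex v e0 hincident t0 ht0T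
          rcases eq_or_lt_of_le (hdeg v) with hdv | hdv
          · exfalso
            have := hbdry v hdv.symm t0 ht0T
            rw [← huv] at this
            rw [hm] at hmneg
            nlinarith
          · have hd2 : 2 ≤ edgeDeg src tgt v := hdv
            have hsum := hcoupling v hd2 t0 ht0T
            have hterm : ∀ e ∈ Finset.univ,
                eps e * ux e (endCoord src ℓ e v) t0 * inc src tgt e v ≤ 0 := by
              intro e _
              by_cases hs : src e = v
              · have htg : ¬ tgt e = v := fun h => hne e (hs.trans h.symm)
                have hend : endCoord src ℓ e v = 0 := by simp [endCoord, hs]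
                have hvalue : u e 0 t0 = u e0 x0 t0 := by
                  have := hcont_vertex v e (Or.inl hs) t0 ht0T
                  rw [hend] at this
                  rw [this, huv]
                have hpos : 0 ≤ ux e 0 t0 := by
                  refine wmp_slope_right_ge (hℓ e)
                    (hasDeriv_x e t0 ht0Icc 0 ⟨le_rfl, (hℓ e).le⟩) ?_
                  intro y hy
                  rw [hvalue]
                  exact hminx' e y ⟨hy.1.le, hy.2⟩
                rw [hend]
                have hinc : inc src tgt e v = -1 := by simp [inc, hs, htg]
                rw [hinc]
                nlinarith [heps e]
              · by_cases htg : tgt e = v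
                · have hend : endCoord src ℓ e v = ℓ e := by simp [endCoord, hs]
                  have hvalue : u e (ℓ e) t0 = u e0 x0 t0 := by
                    have := hcont_vertex v e (Or.inr htg) t0 ht0T
                    rw [hend] at this
                    rw [this, huv]
                  have hneg : ux e (ℓ e) t0 ≤ 0 := by
                    have := wmp_slope_left_le (K := (0:ℝ)) (hℓ e)
                      (hasDeriv_x e t0 ht0Icc (ℓ e) ⟨(hℓ e).le, le_rfl⟩) ?_
                    · linarith [this]
                    · intro y hy
                      rw [hvalue]
                      have := hminx' e y ⟨hy.1, hy.2.le⟩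
                      linarith
                  rw [hend]
                  have hinc : inc src tgt e v = 1 := by simp [inc, hs, htg]
                  rw [hinc]
                  nlinarith [heps e]
                · have hinc : inc src tgt e v = 0 := by simp [inc, hs, htg]
                  rw [hinc]
                  simp
            have hall := (Finset.sum_eq_zero_iff_of_nonpos hterm).1 hsum
            have he00 := hall e0 (Finset.mem_univ e0)
            rw [hvc] at he00
            have hince0 : inc src tgt e0 v = 1 := by simp [inc, hv, hsne, hne e0]
            rw [hince0] at he00
            have hux0 : ux e0 x0 t0 = 0 := by
              have := heps e0
              nlinarith [he00]
            refine ⟨hux0, ?_⟩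
            refine wmp_second_left (A := 0) (B := ℓ e0) (b := 0)
              (f := fun y => u e0 y t0) (g := fun y => ux e0 y t0)
              le_rfl (hℓ0 ▸ hℓ e0) hx0.2
              (fun y hy => hasDeriv_x e0 t0 ht0Icc y hy)
              (hasDeriv_xx e0 t0 ht0Icc x0 hx0) hux0 ?_
            intro y hy
            exact hminx y ⟨hy.1, le_trans hy.2 hx0.2⟩
        · -- interior point
          have hux0 : ux e0 x0 t0 = 0 := by
            have hdx : HasDerivAt (fun y => u e0 y t0) (ux e0 x0 t0) x0 :=
              (hasDeriv_x e0 t0 ht0Icc x0 hx0).hasDerivAt (Icc_mem_nhds h0 hℓ0)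
            have hlocmin : IsLocalMin (fun y => u e0 y t0) x0 := by
              filter_upwards [Icc_mem_nhds h0 hℓ0] with y hy
              exact hminx y hy
            exact hlocmin.hasDerivAt_eq_zero hdx
          refine ⟨hux0, ?_⟩
          refine wmp_second_right (A := 0) (B := ℓ e0) (b := ℓ e0)
            (f := fun y => u e0 y t0) (g := fun y => ux e0 y t0)
            hx0.1 hℓ0 le_rfl
            (fun y hy => hasDeriv_x e0 t0 ht0Icc y hy)
            (hasDeriv_xx e0 t0 ht0Icc x0 hx0) hux0 ?_
          intro y hy
          exact hminx y ⟨le_trans hx0.1 hy.1, hy.2⟩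
    -- contradiction with the differential inequality
    have hin := hineq e0 x0 hx0 t0 ht0T
    rw [hux] at hin
    have h1 : a e0 * ut e0 x0 t0 ≤ a e0 * (-δ) :=
      mul_le_mul_of_nonneg_left hut (ha e0).le
    have h2 : 0 ≤ eps e0 * uxx e0 x0 t0 := mul_nonneg (heps e0).le huxx
    have h3 : 0 < a e0 * δ := mul_pos (ha e0) hδ
    linarith
  -- conclusion
  intro e x hx t ht
  have hlt : ∀ s ∈ Set.Ico (0:ℝ) T, 0 ≤ u e x s := by
    intro s hs
    rcases eq_or_lt_of_le hs.1 with h0 | h0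
    · rw [← h0]; exact hinit e x hx
    · by_contra hneg
      push_neg at hneg
      have hδ : 0 < -(u e x s) / (2 * s) := div_pos (by linarith) (by linarith)
      have hks := key _ hδ ((s + T) / 2) (by linarith [hs.2]) (by linarith [hs.2])
        e x hx s ⟨hs.1, by linarith [hs.2]⟩
      have hss : (-(u e x s) / (2 * s)) * s = -(u e x s) / 2 := by
        field_simp
      rw [hss] at hks
      linarith
  rcases eq_or_lt_of_le ht.2 with hTeq | hTlt
  · have hc : Filter.Tendsto (fun s => u e x s) (𝓝[Set.Ico (0:ℝ) T] T) (𝓝 (u e x T)) :=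
      ((hasDeriv_t e x hx T ⟨hT.le, le_rfl⟩).continuousWithinAt).mono Set.Ico_subset_Icc_self
    haveI : (𝓝[Set.Ico (0:ℝ) T] T).NeBot := right_nhdsWithin_Ico_neBot hT
    rw [hTeq]
    refine ge_of_tendsto hc ?_
    filter_upwards [eventually_mem_nhdsWithin] with s hs
    exact hlt s hs
  · exact hlt t ⟨ht.1, hTlt⟩
end

section
/- Uniform bounds independent of ε (Lemma 3.2): Let T > 0, let the initial data u₀ be such that each u₀^e is twice continuously differentiable on [0,ℓ^e], u₀ is continuous across vertices, and let the boundary data g^v, v ∈ V∂, be twice continuously differentiable on [0,T] with the compatibility conditions of Theorem 2.1. Then there exists a constant C_u, depending only on the network, the coefficients a^e, b^e, the initial data u₀, the boundary data g and T — but not on the diffusion coefficients ε^e ∈ (0,1] — such that the classical solution u_ε of the convection–diffusion network problem satisfies |u_ε^e(x,t)| + |∂_t u_ε^e(x,t)| ≤ C_u for all x ∈ [0,ℓ^e], e ∈ E, and t ∈ [0,T]. -/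
open Set Finset

open Filter Topology

/-- The comparison function `u - φ - λ t` used in the maximum principle, where
`φ(x) = x (x - ℓ)/ℓ`. -/
noncomputable def wAux (uu : ℝ → ℝ → ℝ) (len lam : ℝ) (x t : ℝ) : ℝ :=
  uu x t - x * (x - len) * len⁻¹ - lam * t


/-- If `f` has a max on `s` at `c` and an interval to the right lies in `s`,
the (one-sided) derivative at `c` is nonpositive. -/
lemma deriv_nonpos_of_max_right {f : ℝ → ℝ} {s : Set ℝ} {c d f' : ℝ} (hcd : c < d)
    (hsub : Set.Ioo c d ⊆ s) (hmax : ∀ y ∈ s, f y ≤ f c)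
    (hd : HasDerivWithinAt f f' s c) : f' ≤ 0 := by
  have h := hasDerivWithinAt_iff_tendsto_slope.mp hd
  have hmono : 𝓝[Set.Ioo c d] c ≤ 𝓝[s \ {c}] c := by
    apply nhdsWithin_mono
    intro y hy
    exact ⟨hsub hy, fun h0 => (lt_irrefl c (h0 ▸ hy.1))⟩
  have h2 : Filter.Tendsto (slope f c) (𝓝[Set.Ioo c d] c) (𝓝 f') := h.mono_left hmono
  have hne : (𝓝[Set.Ioo c d] c).NeBot := by
    rw [nhdsWithin_Ioo_eq_nhdsGT hcd]
    infer_instance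
  refine le_of_tendsto h2 ?_
  filter_upwards [self_mem_nhdsWithin] with y hy
  rw [slope_def_field]
  apply div_nonpos_of_nonpos_of_nonneg
  · linarith [hmax y (hsub hy)]
  · linarith [hy.1]

/-- If `f` has a max on `s` at `c` and an interval to the left lies in `s`,
the (one-sided) derivative at `c` is nonnegative. -/
lemma deriv_nonneg_of_max_left {f : ℝ → ℝ} {s : Set ℝ} {c d f' : ℝ} (hcd : d < c)
    (hsub : Set.Ioo d c ⊆ s) (hmax : ∀ y ∈ s, f y ≤ f c)
    (hd : HasDerivWithinAt f f' s c) : 0 ≤ f' := by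
  have h := hasDerivWithinAt_iff_tendsto_slope.mp hd
  have hmono : 𝓝[Set.Ioo d c] c ≤ 𝓝[s \ {c}] c := by
    apply nhdsWithin_mono
    intro y hy
    exact ⟨hsub hy, fun h0 => (lt_irrefl c (h0 ▸ hy.2))⟩
  have h2 : Filter.Tendsto (slope f c) (𝓝[Set.Ioo d c] c) (𝓝 f') := h.mono_left hmono
  have hne : (𝓝[Set.Ioo d c] c).NeBot := by
    rw [nhdsWithin_Ioo_eq_nhdsLT hcd]
    infer_instance
  refine ge_of_tendsto h2 ?_
  filter_upwards [self_mem_nhdsWithin] with y hy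
  rw [slope_def_field]
  have h1 : f y - f c ≤ 0 := by linarith [hmax y (hsub hy)]
  have h2 : y - c < 0 := by linarith [hy.2]
  rw [div_nonneg_iff]
  right
  exact ⟨h1, h2.le⟩

/-- Second-derivative test at an interior maximum. -/
lemma second_deriv_nonpos_of_interior_max {f g : ℝ → ℝ} {A B x0 f2 : ℝ}
    (hx0 : x0 ∈ Set.Ioo A B) (hfc : ContinuousOn f (Set.Icc A B))
    (hfd : ∀ y ∈ Set.Ioo A B, HasDerivAt f (g y) y)
    (hg0 : g x0 = 0) (hgd : HasDerivAt g f2 x0)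
    (hmax : ∀ y ∈ Set.Icc A B, f y ≤ f x0) : f2 ≤ 0 := by
  by_contra hpos
  push_neg at hpos
  have hslope := hasDerivAt_iff_tendsto_slope.mp hgd
  have hmono : 𝓝[>] x0 ≤ 𝓝[{x0}ᶜ] x0 := nhdsWithin_mono _ (fun y hy => ne_of_gt hy)
  have h2 : Filter.Tendsto (slope g x0) (𝓝[>] x0) (𝓝 f2) := hslope.mono_left hmono
  have hev : ∀ᶠ y in 𝓝[>] x0, 0 < slope g x0 y := h2.eventually (eventually_gt_nhds hpos)
  have hev2 : Set.Ioo x0 B ∈ 𝓝[>] x0 := Ioo_mem_nhdsGT_of_mem ⟨le_refl _, hx0.2⟩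
  have hev3 : {y | 0 < slope g x0 y} ∩ Set.Ioo x0 B ∈ 𝓝[>] x0 := Filter.inter_mem hev hev2
  rcases mem_nhdsGT_iff_exists_Ioo_subset.mp hev3 with ⟨d, hd, hsub⟩
  -- pick x1 in (x0, d)
  set x1 := (x0 + min d B) / 2 with hx1def
  have hdB : x0 < min d B := lt_min hd hx0.2
  have hx1 : x0 < x1 := by simp only [hx1def]; linarith
  have hx1d : x1 < min d B := by simp only [hx1def]; linarith
  have hgpos : ∀ y ∈ Set.Ioo x0 x1, 0 < g y := by
    intro y hy
    have hymem : y ∈ Set.Ioo x0 d := ⟨hy.1, lt_trans hy.2 (lt_of_lt_of_le hx1d (min_le_left _ _))⟩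
    have := (hsub hymem).1
    have hslope_pos : 0 < slope g x0 y := this
    rw [slope_def_field, hg0, sub_zero] at hslope_pos
    have hynum : 0 < y - x0 := by linarith [hy.1]
    calc (0:ℝ) < slope g x0 y * (y - x0) := by
            rw [slope_def_field, hg0, sub_zero]
            exact mul_pos hslope_pos hynum
      _ = g y := by rw [slope_def_field, hg0, sub_zero, div_mul_cancel₀ _ hynum.ne']
  -- f strictly increasing on [x0, x1]
  have hx1B : x1 < B := lt_of_lt_of_le hx1d (min_le_right _ _)
  have hIccsub : Set.Icc x0 x1 ⊆ Set.Icc A B := Set.Icc_subset_Icc hx0.1.le hx1B.le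
  have hmonoF : StrictMonoOn f (Set.Icc x0 x1) := by
    apply strictMonoOn_of_deriv_pos (convex_Icc x0 x1) (hfc.mono hIccsub)
    intro y hy
    rw [interior_Icc] at hy
    have hyAB : y ∈ Set.Ioo A B := ⟨lt_of_lt_of_le hx0.1 hy.1.le, lt_trans hy.2 hx1B⟩
    rw [(hfd y hyAB).deriv]
    exact hgpos y hy
  have h1 : f x0 < f x1 := hmonoF ⟨le_refl x0, hx1.le⟩ ⟨hx1.le, le_refl x1⟩ hx1
  have h2' : f x1 ≤ f x0 := hmax x1 (hIccsub ⟨hx1.le, le_refl x1⟩)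
  linarith

/-- A uniform bound for finitely many continuous functions on compact sets. -/
lemma exists_uniform_bound {ι α : Type} [Fintype ι] [TopologicalSpace α] {s : ι → Set α}
    (hs : ∀ i, IsCompact (s i)) (f : ι → α → ℝ) (hf : ∀ i, ContinuousOn (f i) (s i)) :
    ∃ K : ℝ, 0 ≤ K ∧ ∀ i, ∀ x ∈ s i, |f i x| ≤ K := by
  have h : ∀ i, ∃ C, ∀ x ∈ s i, |f i x| ≤ C := by
    intro i
    rcases (hs i).exists_bound_of_continuousOn (hf i) with ⟨C, hC⟩
    exact ⟨C, fun x hx => by simpa [Real.norm_eq_abs] using hC x hx⟩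
  choose K hK using h
  refine ⟨∑ i, max (K i) 0, Finset.sum_nonneg (fun i _ => le_max_right _ _), ?_⟩
  intro i x hx
  calc |f i x| ≤ K i := hK i x hx
    _ ≤ max (K i) 0 := le_max_left _ _
    _ ≤ ∑ j, max (K j) 0 := Finset.single_le_sum (f := fun j => max (K j) 0) (fun j _ => le_max_right _ _) (Finset.mem_univ i)

lemma max_principle
    (E V : Type) [Fintype E] [Fintype V] [DecidableEq E] [DecidableEq V] [Nonempty E]
    (src tgt : E → V) (hne : ∀ e, src e ≠ tgt e)
    (ℓ a b eps : E → ℝ) (T : ℝ) (hT : 0 < T)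
    (hℓ : ∀ e, 0 < ℓ e) (ha : ∀ e, 0 < a e) (hb : ∀ e, 0 < b e)
    (heps : ∀ e, 0 < eps e ∧ eps e ≤ 1)
    (hflow : ∀ v : V, 2 ≤ edgeDeg src tgt v → ∑ e, b e * inc src tgt e v = 0)
    (u ux uxx ut : E → ℝ → ℝ → ℝ) (uhat : V → ℝ → ℝ)
    (cont_u : ∀ e, ContinuousOn (fun p : ℝ × ℝ => u e p.1 p.2) (Set.Icc 0 (ℓ e) ×ˢ Set.Icc 0 T))
    (hasDeriv_x : ∀ e, ∀ t ∈ Set.Icc (0 : ℝ) T, ∀ x ∈ Set.Icc (0 : ℝ) (ℓ e),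
      HasDerivWithinAt (fun y => u e y t) (ux e x t) (Set.Icc 0 (ℓ e)) x)
    (hasDeriv_xx : ∀ e, ∀ t ∈ Set.Icc (0 : ℝ) T, ∀ x ∈ Set.Icc (0 : ℝ) (ℓ e),
      HasDerivWithinAt (fun y => ux e y t) (uxx e x t) (Set.Icc 0 (ℓ e)) x)
    (hasDeriv_t : ∀ e, ∀ x ∈ Set.Icc (0 : ℝ) (ℓ e), ∀ t ∈ Set.Icc (0 : ℝ) T,
      HasDerivWithinAt (fun s => u e x s) (ut e x t) (Set.Icc 0 T) t)
    (pde : ∀ e, ∀ x ∈ Set.Icc (0 : ℝ) (ℓ e), ∀ t ∈ Set.Icc (0 : ℝ) T,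
      a e * ut e x t + b e * ux e x t = eps e * uxx e x t)
    (vertex_continuity : ∀ (v : V) (e : E), (src e = v ∨ tgt e = v) → ∀ t ∈ Set.Icc (0 : ℝ) T,
      u e (endCoord src ℓ e v) t = uhat v t)
    (coupling : ∀ v : V, 2 ≤ edgeDeg src tgt v → ∀ t ∈ Set.Icc (0 : ℝ) T,
      ∑ e, (b e * u e (endCoord src ℓ e v) t - eps e * ux e (endCoord src ℓ e v) t)
        * inc src tgt e v = 0)
    (lam L K0 Kg : ℝ)
    (hlam : ∀ e, b e + 2 / ℓ e < a e * lam)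
    (hL : ∀ e, ℓ e ≤ L)
    (hK0 : ∀ e, ∀ x ∈ Set.Icc (0:ℝ) (ℓ e), u e x 0 ≤ K0)
    (hKg : ∀ v, edgeDeg src tgt v = 1 → ∀ t ∈ Set.Icc (0:ℝ) T, uhat v t ≤ Kg) :
    ∀ e, ∀ x ∈ Set.Icc (0:ℝ) (ℓ e), ∀ t ∈ Set.Icc (0:ℝ) T,
      u e x t ≤ max K0 Kg + L / 4 + lam * T := by
  classical
  have hlampos : 0 < lam := by
    obtain ⟨e⟩ := ‹Nonempty E›
    have h1 := hlam e
    have h2 : 0 < 2 / ℓ e := div_pos two_pos (hℓ e)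
    nlinarith [hℓ e, ha e, hb e]
  have hL0 : 0 < L := lt_of_lt_of_le (hℓ (Classical.arbitrary E)) (hL _)
  -- the comparison function
  set w : E → ℝ → ℝ → ℝ := fun e => wAux (u e) (ℓ e) lam with hwdef
  have cont_w : ∀ e, ContinuousOn (fun p : ℝ × ℝ => w e p.1 p.2)
      (Set.Icc 0 (ℓ e) ×ˢ Set.Icc 0 T) := by
    intro e
    simp only [hwdef, wAux]
    have c1 : Continuous fun p : ℝ × ℝ => p.1 * (p.1 - ℓ e) * (ℓ e)⁻¹ :=
      (continuous_fst.mul (continuous_fst.sub continuous_const)).mul continuous_const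
    have c2 : Continuous fun p : ℝ × ℝ => lam * p.2 := continuous_const.mul continuous_snd
    exact ((cont_u e).sub c1.continuousOn).sub c2.continuousOn
  -- derivative of the slices of w
  have hφd : ∀ (e : E) (c : ℝ),
      HasDerivAt (fun y : ℝ => y * (y - ℓ e) * (ℓ e)⁻¹) ((2 * c - ℓ e) * (ℓ e)⁻¹) c := by
    intro e c
    have h1 : HasDerivAt (fun y : ℝ => y * (y - ℓ e)) (1 * (c - ℓ e) + c * 1) c :=
      (hasDerivAt_id c).mul ((hasDerivAt_id c).sub_const (ℓ e))
    have h2 := h1.mul_const (ℓ e)⁻¹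
    exact h2.congr_deriv (by ring)
  have hwd : ∀ e, ∀ t ∈ Set.Icc (0:ℝ) T, ∀ x ∈ Set.Icc (0:ℝ) (ℓ e),
      HasDerivWithinAt (fun y => w e y t) (ux e x t - (2 * x - ℓ e) * (ℓ e)⁻¹)
        (Set.Icc 0 (ℓ e)) x := by
    intro e t ht x hx
    have h1 := ((hasDeriv_x e t ht x hx).sub ((hφd e x).hasDerivWithinAt)).sub_const (lam * t)
    simpa only [hwdef, wAux, Pi.sub_def] using h1
  -- maximum point
  have hcomp : ∀ e : E, IsCompact ((Set.Icc (0:ℝ) (ℓ e)) ×ˢ (Set.Icc (0:ℝ) T)) :=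
    fun e => isCompact_Icc.prod isCompact_Icc
  have hne' : ∀ e : E, ((Set.Icc (0:ℝ) (ℓ e)) ×ˢ (Set.Icc (0:ℝ) T)).Nonempty :=
    fun e => (Set.nonempty_Icc.2 (hℓ e).le).prod (Set.nonempty_Icc.2 hT.le)
  choose P hPmem hPmax using fun e => (hcomp e).exists_isMaxOn (hne' e) (cont_w e)
  obtain ⟨e0, -, hmax0⟩ := Finset.exists_max_image Finset.univ
    (fun e => w e (P e).1 (P e).2) Finset.univ_nonempty
  set x0 := (P e0).1 with hx0def
  set t0 := (P e0).2 with ht0def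
  have hx0 : x0 ∈ Set.Icc (0:ℝ) (ℓ e0) := (Set.mem_prod.mp (hPmem e0)).1
  have ht0 : t0 ∈ Set.Icc (0:ℝ) T := (Set.mem_prod.mp (hPmem e0)).2
  have hGmax : ∀ e, ∀ x ∈ Set.Icc (0:ℝ) (ℓ e), ∀ t ∈ Set.Icc (0:ℝ) T,
      w e x t ≤ w e0 x0 t0 := by
    intro e x hx t ht
    have h1 : w e x t ≤ w e (P e).1 (P e).2 := hPmax e (Set.mk_mem_prod hx ht)
    exact h1.trans (hmax0 e (Finset.mem_univ e))
  -- the key vertex contradiction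
  have key : ∀ v : V, 2 ≤ edgeDeg src tgt v →
      (∀ e, ∀ x ∈ Set.Icc (0:ℝ) (ℓ e), w e x t0 ≤ uhat v t0 - lam * t0) → False := by
    intro v hdeg2 hVmax
    have hwc : ∀ e, (src e = v ∨ tgt e = v) →
        w e (endCoord src ℓ e v) t0 = uhat v t0 - lam * t0 := by
      intro e hev
      have h1 := vertex_continuity v e hev t0 ht0
      by_cases hsrc : src e = v
      · simp only [hwdef, wAux, endCoord, if_pos hsrc] at h1 ⊢
        rw [h1]; ring
      · simp only [hwdef, wAux, endCoord, if_neg hsrc] at h1 ⊢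
        rw [h1]; ring
    have hterm : ∀ e, (src e = v ∨ tgt e = v) →
        1 ≤ ux e (endCoord src ℓ e v) t0 * inc src tgt e v := by
      intro e hev
      have hmaxslice : ∀ y ∈ Set.Icc (0:ℝ) (ℓ e),
          w e y t0 ≤ w e (endCoord src ℓ e v) t0 := by
        intro y hy
        rw [hwc e hev]
        exact hVmax e y hy
      by_cases hsrc : src e = v
      · have hcoord : endCoord src ℓ e v = 0 := by simp [endCoord, hsrc]
        have hderivw := hwd e t0 ht0 0 ⟨le_refl 0, (hℓ e).le⟩
        rw [hcoord] at hmaxslice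
        have hsign := deriv_nonpos_of_max_right (hℓ e) Set.Ioo_subset_Icc_self hmaxslice hderivw
        have htgt : tgt e ≠ v := fun h => hne e (hsrc.trans h.symm)
        have hinc : inc src tgt e v = -1 := by simp [inc, hsrc, htgt]
        have hc : (2 * (0:ℝ) - ℓ e) * (ℓ e)⁻¹ = -1 := by
          have hne0 : ℓ e ≠ 0 := (hℓ e).ne'
          field_simp
          ring
        rw [hc] at hsign
        rw [hcoord, hinc]
        nlinarith
      · have htgt : tgt e = v := hev.resolve_left hsrc
        have hcoord : endCoord src ℓ e v = ℓ e := by simp [endCoord, hsrc]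
        have hderivw := hwd e t0 ht0 (ℓ e) ⟨(hℓ e).le, le_refl _⟩
        rw [hcoord] at hmaxslice
        have hsign := deriv_nonneg_of_max_left (hℓ e) Set.Ioo_subset_Icc_self hmaxslice hderivw
        have hinc : inc src tgt e v = 1 := by simp [inc, hsrc, htgt]
        have hc : (2 * ℓ e - ℓ e) * (ℓ e)⁻¹ = 1 := by
          have hne0 : ℓ e ≠ 0 := (hℓ e).ne'
          field_simp
          ring
        rw [hc] at hsign
        rw [hcoord, hinc]
        nlinarith
    -- the flux sum
    have hsum0 := coupling v hdeg2 t0 ht0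
    have hsplit : ∀ e,
        (b e * u e (endCoord src ℓ e v) t0 - eps e * ux e (endCoord src ℓ e v) t0)
            * inc src tgt e v
          = b e * uhat v t0 * inc src tgt e v
            - eps e * (ux e (endCoord src ℓ e v) t0 * inc src tgt e v) := by
      intro e
      by_cases hev : src e = v ∨ tgt e = v
      · rw [vertex_continuity v e hev t0 ht0]; ring
      · push_neg at hev
        have hz : inc src tgt e v = 0 := by simp [inc, hev.1, hev.2]
        rw [hz]; ring
    rw [Finset.sum_congr rfl (fun e _ => hsplit e), Finset.sum_sub_distrib] at hsum0
    have hfl : ∑ e, b e * uhat v t0 * inc src tgt e v = 0 := by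
      have h1 := hflow v hdeg2
      calc ∑ e, b e * uhat v t0 * inc src tgt e v
          = uhat v t0 * ∑ e, b e * inc src tgt e v := by
            rw [Finset.mul_sum]; exact Finset.sum_congr rfl (fun e _ => by ring)
        _ = 0 := by rw [h1, mul_zero]
    rw [hfl] at hsum0
    have hz : ∑ e, eps e * (ux e (endCoord src ℓ e v) t0 * inc src tgt e v) = 0 := by
      linarith
    have hge : ∀ e ∈ Finset.univ,
        (if src e = v ∨ tgt e = v then eps e else 0)
          ≤ eps e * (ux e (endCoord src ℓ e v) t0 * inc src tgt e v) := by
      intro e _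
      by_cases hev : src e = v ∨ tgt e = v
      · rw [if_pos hev]
        nlinarith [(heps e).1, hterm e hev]
      · rw [if_neg hev]
        push_neg at hev
        have hz2 : inc src tgt e v = 0 := by simp [inc, hev.1, hev.2]
        rw [hz2]; simp
    have hex : ∃ e', src e' = v ∨ tgt e' = v := by
      have hcard : 0 < (Finset.univ.filter (fun e => src e = v ∨ tgt e = v)).card := by
        have := hdeg2; unfold edgeDeg at this; omega
      obtain ⟨e', he'⟩ := Finset.card_pos.mp hcard
      exact ⟨e', (Finset.mem_filter.mp he').2⟩
    obtain ⟨e', he'⟩ := hex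
    have hpos : (0:ℝ) < ∑ e, (if src e = v ∨ tgt e = v then eps e else 0) := by
      have h1 : (0:ℝ) < (if src e' = v ∨ tgt e' = v then eps e' else 0) := by
        rw [if_pos he']; exact (heps e').1
      refine lt_of_lt_of_le h1 (Finset.single_le_sum (f := fun e =>
        (if src e = v ∨ tgt e = v then eps e else 0)) ?_ (Finset.mem_univ e'))
      intro j _
      by_cases hj : src j = v ∨ tgt j = v
      · rw [if_pos hj]; exact (heps j).1.le
      · rw [if_neg hj]
    have hsum_le := Finset.sum_le_sum hge
    rw [hz] at hsum_le
    linarith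
  -- the global max is bounded by the data
  have hW : w e0 x0 t0 ≤ max K0 Kg + L / 4 := by
    rcases eq_or_lt_of_le ht0.1 with ht00 | ht0pos
    · -- t0 = 0 : initial data
      have h1 : u e0 x0 0 ≤ K0 := hK0 e0 x0 hx0
      have h2 : -(x0 * (x0 - ℓ e0)) * (ℓ e0)⁻¹ ≤ ℓ e0 / 4 := by
        rw [show -(x0 * (x0 - ℓ e0)) * (ℓ e0)⁻¹ = -(x0 * (x0 - ℓ e0)) / ℓ e0 from by ring,
          div_le_div_iff₀ (hℓ e0) (by norm_num : (0:ℝ) < 4)]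
        nlinarith [sq_nonneg (2 * x0 - ℓ e0)]
      have h3 : ℓ e0 / 4 ≤ L / 4 := by linarith [hL e0]
      simp only [hwdef, wAux, ← ht00]
      have h4 : K0 ≤ max K0 Kg := le_max_left _ _
      nlinarith
    · -- t0 > 0
      rcases eq_or_lt_of_le hx0.1 with hx00 | hx0pos
      · -- x0 = 0 : vertex src e0
        set v := src e0 with hvdef
        have hWuhat : w e0 x0 t0 = uhat v t0 - lam * t0 := by
          have h1 := vertex_continuity v e0 (Or.inl rfl) t0 ht0
          have hc : endCoord src ℓ e0 v = 0 := by simp [endCoord, hvdef]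
          rw [hc] at h1
          simp only [hwdef, wAux, ← hx00]
          rw [h1]; ring
        by_cases hdeg2 : 2 ≤ edgeDeg src tgt v
        · exact absurd (key v hdeg2 (fun e x hx => by
            rw [← hWuhat]; exact hGmax e x hx t0 ht0)) (fun h => h)
        · have hdeg1 : edgeDeg src tgt v = 1 := by
            have hcard : 0 < (Finset.univ.filter (fun e => src e = v ∨ tgt e = v)).card :=
              Finset.card_pos.mpr ⟨e0, Finset.mem_filter.mpr ⟨Finset.mem_univ _, Or.inl rfl⟩⟩
            unfold edgeDeg at hdeg2 ⊢; omega
          have h1 := hKg v hdeg1 t0 ht0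
          have h2 : 0 ≤ lam * t0 := mul_nonneg hlampos.le ht0.1
          rw [hWuhat]
          have h3 : Kg ≤ max K0 Kg := le_max_right _ _
          nlinarith
      · rcases eq_or_lt_of_le hx0.2 with hx0L | hx0lt
        · -- x0 = ℓ e0 : vertex tgt e0
          set v := tgt e0 with hvdef
          have hsrcne : src e0 ≠ v := hne e0
          have hWuhat : w e0 x0 t0 = uhat v t0 - lam * t0 := by
            have h1 := vertex_continuity v e0 (Or.inr rfl) t0 ht0
            have hc : endCoord src ℓ e0 v = ℓ e0 := by simp [endCoord, hsrcne]
            rw [hc] at h1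
            simp only [hwdef, wAux, hx0L]
            rw [h1]; ring
          by_cases hdeg2 : 2 ≤ edgeDeg src tgt v
          · exact absurd (key v hdeg2 (fun e x hx => by
              rw [← hWuhat]; exact hGmax e x hx t0 ht0)) (fun h => h)
          · have hdeg1 : edgeDeg src tgt v = 1 := by
              have hcard : 0 < (Finset.univ.filter (fun e => src e = v ∨ tgt e = v)).card :=
                Finset.card_pos.mpr ⟨e0, Finset.mem_filter.mpr ⟨Finset.mem_univ _, Or.inr rfl⟩⟩
              unfold edgeDeg at hdeg2 ⊢; omega
            have h1 := hKg v hdeg1 t0 ht0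
            have h2 : 0 ≤ lam * t0 := mul_nonneg hlampos.le ht0.1
            rw [hWuhat]
            have h3 : Kg ≤ max K0 Kg := le_max_right _ _
            nlinarith
        · -- interior maximum : contradiction with the PDE
          exfalso
          have hIccnhds : Set.Icc (0:ℝ) (ℓ e0) ∈ 𝓝 x0 := Icc_mem_nhds hx0pos hx0lt
          -- time derivative is ≥ λ
          have htd : HasDerivWithinAt (fun s => w e0 x0 s) (ut e0 x0 t0 - lam * 1)
              (Set.Icc 0 T) t0 := by
            have h1 := ((hasDeriv_t e0 x0 hx0 t0 ht0).sub_const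
              (x0 * (x0 - ℓ e0) * (ℓ e0)⁻¹)).sub ((hasDerivWithinAt_id t0 (Set.Icc (0:ℝ) T)).const_mul lam)
            simpa only [hwdef, wAux, mul_one, Pi.sub_def, id] using h1
          have htsub : Set.Ioo (0:ℝ) t0 ⊆ Set.Icc (0:ℝ) T :=
            fun y hy => ⟨hy.1.le, hy.2.le.trans ht0.2⟩
          have htsign : 0 ≤ ut e0 x0 t0 - lam * 1 :=
            deriv_nonneg_of_max_left ht0pos htsub
              (fun y hy => hGmax e0 x0 hx0 y hy) htd
          -- space derivative vanishes
          have hxId : HasDerivAt (fun y => w e0 y t0)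
              (ux e0 x0 t0 - (2 * x0 - ℓ e0) * (ℓ e0)⁻¹) x0 :=
            (hwd e0 t0 ht0 x0 hx0).hasDerivAt hIccnhds
          have hlocmax : IsLocalMax (fun y => w e0 y t0) x0 :=
            Filter.eventually_of_mem hIccnhds (fun y hy => hGmax e0 y hy t0 ht0)
          have hx1 : ux e0 x0 t0 - (2 * x0 - ℓ e0) * (ℓ e0)⁻¹ = 0 :=
            hlocmax.hasDerivAt_eq_zero hxId
          -- second derivative test
          have hxx : uxx e0 x0 t0 - 2 * (ℓ e0)⁻¹ ≤ 0 := by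
            apply second_deriv_nonpos_of_interior_max (g := fun y =>
                ux e0 y t0 - (2 * y - ℓ e0) * (ℓ e0)⁻¹)
              (⟨hx0pos, hx0lt⟩ : x0 ∈ Set.Ioo 0 (ℓ e0))
            · exact (cont_w e0).comp ((continuous_id.prodMk continuous_const).continuousOn)
                (fun y hy => Set.mk_mem_prod hy ht0)
            · intro y hy
              exact (hwd e0 t0 ht0 y (Set.Ioo_subset_Icc_self hy)).hasDerivAt
                (Icc_mem_nhds hy.1 hy.2)
            · exact hx1
            · have h1 := (hasDeriv_xx e0 t0 ht0 x0 hx0).hasDerivAt hIccnhds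
              have h2 : HasDerivAt (fun y : ℝ => (2 * y - ℓ e0) * (ℓ e0)⁻¹)
                  (2 * (ℓ e0)⁻¹) x0 := by
                have h3 := (((hasDerivAt_id x0).const_mul (2:ℝ)).sub_const (ℓ e0)).mul_const (ℓ e0)⁻¹
                exact h3.congr_deriv (by ring)
              exact h1.sub h2
            · exact fun y hy => hGmax e0 y hy t0 ht0
          -- PDE contradiction
          have hpde := pde e0 x0 hx0 t0 ht0
          have hq1 : (2 * x0 - ℓ e0) * (ℓ e0)⁻¹ ≤ 1 := by
            rw [show (2 * x0 - ℓ e0) * (ℓ e0)⁻¹ = (2 * x0 - ℓ e0) / ℓ e0 from by ring,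
              div_le_one (hℓ e0)]
            linarith [hx0.2]
          have hq2 : -1 ≤ (2 * x0 - ℓ e0) * (ℓ e0)⁻¹ := by
            rw [show (2 * x0 - ℓ e0) * (ℓ e0)⁻¹ = (2 * x0 - ℓ e0) / ℓ e0 from by ring,
              le_div_iff₀ (hℓ e0)]
            linarith [hx0.1]
          have hux : ux e0 x0 t0 = (2 * x0 - ℓ e0) * (ℓ e0)⁻¹ := by linarith
          have hut : lam ≤ ut e0 x0 t0 := by linarith
          have hp : (0:ℝ) < 2 * (ℓ e0)⁻¹ := mul_pos two_pos (inv_pos.mpr (hℓ e0))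
          have h5 : eps e0 * uxx e0 x0 t0 ≤ 2 * (ℓ e0)⁻¹ := by
            rcases le_or_gt (uxx e0 x0 t0) 0 with h | h
            · nlinarith [(heps e0).1]
            · nlinarith [(heps e0).2]
          have hba := hlam e0
          rw [div_eq_mul_inv] at hba
          have h6 : a e0 * lam ≤ a e0 * ut e0 x0 t0 :=
            mul_le_mul_of_nonneg_left hut (ha e0).le
          have h7 : b e0 * (-1 : ℝ) ≤ b e0 * ((2 * x0 - ℓ e0) * (ℓ e0)⁻¹) :=
            mul_le_mul_of_nonneg_left hq2 (hb e0).le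
          rw [hux] at hpde
          nlinarith [hb e0]
  -- conclude
  intro e x hx t ht
  have h1 : w e x t ≤ w e0 x0 t0 := hGmax e x hx t ht
  have hφ : x * (x - ℓ e) * (ℓ e)⁻¹ ≤ 0 := by
    have h2 : x * (x - ℓ e) ≤ 0 := mul_nonpos_of_nonneg_of_nonpos hx.1 (by linarith [hx.2])
    have h3 : (0:ℝ) ≤ (ℓ e)⁻¹ := (inv_nonneg).mpr (hℓ e).le
    exact mul_nonpos_of_nonpos_of_nonneg h2 h3
  have heq : u e x t = w e x t + x * (x - ℓ e) * (ℓ e)⁻¹ + lam * t := by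
    simp only [hwdef, wAux]; ring
  have h4 : lam * t ≤ lam * T := mul_le_mul_of_nonneg_left ht.2 hlampos.le
  linarith

lemma max_principle_abs
    (E V : Type) [Fintype E] [Fintype V] [DecidableEq E] [DecidableEq V] [Nonempty E]
    (src tgt : E → V) (hne : ∀ e, src e ≠ tgt e)
    (ℓ a b eps : E → ℝ) (T : ℝ) (hT : 0 < T)
    (hℓ : ∀ e, 0 < ℓ e) (ha : ∀ e, 0 < a e) (hb : ∀ e, 0 < b e)
    (heps : ∀ e, 0 < eps e ∧ eps e ≤ 1)
    (hflow : ∀ v : V, 2 ≤ edgeDeg src tgt v → ∑ e, b e * inc src tgt e v = 0)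
    (u ux uxx ut : E → ℝ → ℝ → ℝ) (uhat : V → ℝ → ℝ)
    (cont_u : ∀ e, ContinuousOn (fun p : ℝ × ℝ => u e p.1 p.2) (Set.Icc 0 (ℓ e) ×ˢ Set.Icc 0 T))
    (hasDeriv_x : ∀ e, ∀ t ∈ Set.Icc (0 : ℝ) T, ∀ x ∈ Set.Icc (0 : ℝ) (ℓ e),
      HasDerivWithinAt (fun y => u e y t) (ux e x t) (Set.Icc 0 (ℓ e)) x)
    (hasDeriv_xx : ∀ e, ∀ t ∈ Set.Icc (0 : ℝ) T, ∀ x ∈ Set.Icc (0 : ℝ) (ℓ e),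
      HasDerivWithinAt (fun y => ux e y t) (uxx e x t) (Set.Icc 0 (ℓ e)) x)
    (hasDeriv_t : ∀ e, ∀ x ∈ Set.Icc (0 : ℝ) (ℓ e), ∀ t ∈ Set.Icc (0 : ℝ) T,
      HasDerivWithinAt (fun s => u e x s) (ut e x t) (Set.Icc 0 T) t)
    (pde : ∀ e, ∀ x ∈ Set.Icc (0 : ℝ) (ℓ e), ∀ t ∈ Set.Icc (0 : ℝ) T,
      a e * ut e x t + b e * ux e x t = eps e * uxx e x t)
    (vertex_continuity : ∀ (v : V) (e : E), (src e = v ∨ tgt e = v) → ∀ t ∈ Set.Icc (0 : ℝ) T,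
      u e (endCoord src ℓ e v) t = uhat v t)
    (coupling : ∀ v : V, 2 ≤ edgeDeg src tgt v → ∀ t ∈ Set.Icc (0 : ℝ) T,
      ∑ e, (b e * u e (endCoord src ℓ e v) t - eps e * ux e (endCoord src ℓ e v) t)
        * inc src tgt e v = 0)
    (lam L K0 Kg : ℝ)
    (hlam : ∀ e, b e + 2 / ℓ e < a e * lam)
    (hL : ∀ e, ℓ e ≤ L)
    (hK0 : ∀ e, ∀ x ∈ Set.Icc (0:ℝ) (ℓ e), |u e x 0| ≤ K0)
    (hKg : ∀ v, edgeDeg src tgt v = 1 → ∀ t ∈ Set.Icc (0:ℝ) T, |uhat v t| ≤ Kg) :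
    ∀ e, ∀ x ∈ Set.Icc (0:ℝ) (ℓ e), ∀ t ∈ Set.Icc (0:ℝ) T,
      |u e x t| ≤ max K0 Kg + L / 4 + lam * T := by
  have h1 := max_principle E V src tgt hne ℓ a b eps T hT hℓ ha hb heps hflow
    u ux uxx ut uhat cont_u hasDeriv_x hasDeriv_xx hasDeriv_t pde vertex_continuity coupling
    lam L K0 Kg hlam hL
    (fun e x hx => (abs_le.mp (hK0 e x hx)).2)
    (fun v hv t ht => (abs_le.mp (hKg v hv t ht)).2)
  have h2 := max_principle E V src tgt hne ℓ a b eps T hT hℓ ha hb heps hflow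
    (fun e x t => -(u e x t)) (fun e x t => -(ux e x t)) (fun e x t => -(uxx e x t))
    (fun e x t => -(ut e x t)) (fun v t => -(uhat v t))
    (fun e => (cont_u e).neg)
    (fun e t ht x hx => (hasDeriv_x e t ht x hx).neg)
    (fun e t ht x hx => (hasDeriv_xx e t ht x hx).neg)
    (fun e x hx t ht => (hasDeriv_t e x hx t ht).neg)
    (fun e x hx t ht => by
      have := pde e x hx t ht
      simp only [mul_neg]
      linarith)
    (fun v e hev t ht => by
      have := vertex_continuity v e hev t ht
      simp only [this])
    (fun v hv t ht => by
      have hc := coupling v hv t ht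
      calc ∑ e, (b e * -u e (endCoord src ℓ e v) t - eps e * -ux e (endCoord src ℓ e v) t)
            * inc src tgt e v
          = -∑ e, (b e * u e (endCoord src ℓ e v) t - eps e * ux e (endCoord src ℓ e v) t)
            * inc src tgt e v := by
            rw [← Finset.sum_neg_distrib]
            exact Finset.sum_congr rfl (fun e _ => by ring)
        _ = 0 := by rw [hc, neg_zero])
    lam L K0 Kg hlam hL
    (fun e x hx => by
      have := (abs_le.mp (hK0 e x hx)).1
      linarith)
    (fun v hv t ht => by
      have := (abs_le.mp (hKg v hv t ht)).1
      linarith)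
  intro e x hx t ht
  rw [abs_le]
  constructor
  · have := h2 e x hx t ht
    linarith
  · exact h1 e x hx t ht

/-- A classical solution of the convection–diffusion problem on the network with edges `E`,
vertices `V`, edge lengths `ℓ`, coefficients `a`, `b`, diffusion `eps`, time horizon `T`,
initial data `u0` and boundary data `g`.  The fields `ux`, `uxx`, `ut` are the spatial and
temporal derivatives of `u`, and `uhat` are the common nodal values. -/
structure CDSol (E V : Type) [Fintype E] [Fintype V] [DecidableEq E] [DecidableEq V]
    (src tgt : E → V) (ℓ a b eps : E → ℝ) (T : ℝ)
    (u0 : E → ℝ → ℝ) (g : V → ℝ → ℝ) : Type where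
  u : E → ℝ → ℝ → ℝ
  ux : E → ℝ → ℝ → ℝ
  uxx : E → ℝ → ℝ → ℝ
  ut : E → ℝ → ℝ → ℝ
  uhat : V → ℝ → ℝ
  cont_u : ∀ e, ContinuousOn (fun p : ℝ × ℝ => u e p.1 p.2) (Set.Icc 0 (ℓ e) ×ˢ Set.Icc 0 T)
  cont_ux : ∀ e, ContinuousOn (fun p : ℝ × ℝ => ux e p.1 p.2) (Set.Icc 0 (ℓ e) ×ˢ Set.Icc 0 T)
  cont_uxx : ∀ e, ContinuousOn (fun p : ℝ × ℝ => uxx e p.1 p.2) (Set.Icc 0 (ℓ e) ×ˢ Set.Icc 0 T)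
  cont_ut : ∀ e, ContinuousOn (fun p : ℝ × ℝ => ut e p.1 p.2) (Set.Icc 0 (ℓ e) ×ˢ Set.Icc 0 T)
  hasDeriv_x : ∀ e, ∀ t ∈ Set.Icc (0 : ℝ) T, ∀ x ∈ Set.Icc (0 : ℝ) (ℓ e),
      HasDerivWithinAt (fun y => u e y t) (ux e x t) (Set.Icc 0 (ℓ e)) x
  hasDeriv_xx : ∀ e, ∀ t ∈ Set.Icc (0 : ℝ) T, ∀ x ∈ Set.Icc (0 : ℝ) (ℓ e),
      HasDerivWithinAt (fun y => ux e y t) (uxx e x t) (Set.Icc 0 (ℓ e)) x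
  hasDeriv_t : ∀ e, ∀ x ∈ Set.Icc (0 : ℝ) (ℓ e), ∀ t ∈ Set.Icc (0 : ℝ) T,
      HasDerivWithinAt (fun s => u e x s) (ut e x t) (Set.Icc 0 T) t
  pde : ∀ e, ∀ x ∈ Set.Icc (0 : ℝ) (ℓ e), ∀ t ∈ Set.Icc (0 : ℝ) T,
      a e * ut e x t + b e * ux e x t = eps e * uxx e x t
  vertex_continuity : ∀ (v : V) (e : E), (src e = v ∨ tgt e = v) → ∀ t ∈ Set.Icc (0 : ℝ) T,
      u e (endCoord src ℓ e v) t = uhat v t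
  coupling : ∀ v : V, 2 ≤ edgeDeg src tgt v → ∀ t ∈ Set.Icc (0 : ℝ) T,
      ∑ e, (b e * u e (endCoord src ℓ e v) t - eps e * ux e (endCoord src ℓ e v) t)
        * inc src tgt e v = 0
  bdry : ∀ v : V, edgeDeg src tgt v = 1 → ∀ t ∈ Set.Icc (0 : ℝ) T, uhat v t = g v t
  init : ∀ e, ∀ x ∈ Set.Icc (0 : ℝ) (ℓ e), u e x 0 = u0 e x

/-- **Lemma 3.2 (uniform bounds independent of ε).**  For fixed network, coefficients
`a`, `b`, initial data `u0`, boundary data `g` and horizon `T`, there is a constant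
`C_u`, independent of the diffusion coefficients `ε ∈ (0,1]`, such that every classical
solution of the convection–diffusion network problem satisfies
`|u_ε| + |∂ₜ u_ε| ≤ C_u` on the whole space-time domain. -/
theorem cd_uniform_bounds
    (E V : Type) [Fintype E] [Fintype V] [DecidableEq E] [DecidableEq V]
    (src tgt : E → V) (hne : ∀ e, src e ≠ tgt e)
    (ℓ a b : E → ℝ) (T : ℝ) (hT : 0 < T)
    (hℓ : ∀ e, 0 < ℓ e) (ha : ∀ e, 0 < a e) (hb : ∀ e, 0 < b e)
    (hdeg : ∀ v : V, 1 ≤ edgeDeg src tgt v)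
    (hflow : ∀ v : V, 2 ≤ edgeDeg src tgt v → ∑ e, b e * inc src tgt e v = 0)
    (u0 : E → ℝ → ℝ) (hu0 : ∀ e, ContDiffOn ℝ 2 (u0 e) (Set.Icc 0 (ℓ e)))
    (uhat0 : V → ℝ)
    (hu0cont : ∀ (v : V) (e : E), (src e = v ∨ tgt e = v) →
      u0 e (endCoord src ℓ e v) = uhat0 v)
    (g : V → ℝ → ℝ) (hg : ∀ v, ContDiffOn ℝ 2 (g v) (Set.Icc 0 T))
    (hcompat : ∀ v : V, edgeDeg src tgt v = 1 → g v 0 = uhat0 v) :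
    ∃ C : ℝ, ∀ eps : E → ℝ, (∀ e, 0 < eps e ∧ eps e ≤ 1) →
      ∀ sol : CDSol E V src tgt ℓ a b eps T u0 g,
        ∀ e, ∀ x ∈ Set.Icc (0 : ℝ) (ℓ e), ∀ t ∈ Set.Icc (0 : ℝ) T,
          |sol.u e x t| + |sol.ut e x t| ≤ C := by
    classical
  rcases isEmpty_or_nonempty E with hEmp | hEne
  · exact ⟨0, fun eps heps sol e => isEmptyElim e⟩
  have hEu : (Finset.univ : Finset E).Nonempty := Finset.univ_nonempty
  -- constants depending only on the data
  obtain ⟨L, hL0, hL⟩ : ∃ L, 0 < L ∧ ∀ e, ℓ e ≤ L := by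
    refine ⟨Finset.univ.sup' hEu ℓ, ?_, fun e => Finset.le_sup' ℓ (Finset.mem_univ e)⟩
    exact lt_of_lt_of_le (hℓ (Classical.arbitrary E))
      (Finset.le_sup' ℓ (Finset.mem_univ _))
  obtain ⟨lam, hlampos, hlam⟩ : ∃ lam, 0 < lam ∧ ∀ e, b e + 2 / ℓ e < a e * lam := by
    refine ⟨Finset.univ.sup' hEu (fun e => (b e + 2 / ℓ e) / a e) + 1, ?_, ?_⟩
    · have h0 : (0:ℝ) ≤ Finset.univ.sup' hEu (fun e => (b e + 2 / ℓ e) / a e) := by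
        obtain ⟨e⟩ := hEne
        refine le_trans ?_ (Finset.le_sup' (f := fun e => (b e + 2 / ℓ e) / a e)
          (Finset.mem_univ e))
        exact div_nonneg (add_nonneg (hb e).le (div_nonneg two_pos.le (hℓ e).le)) (ha e).le
      linarith
    · intro e
      have h1 : (b e + 2 / ℓ e) / a e ≤ Finset.univ.sup' hEu (fun e => (b e + 2 / ℓ e) / a e) :=
        Finset.le_sup' (f := fun e => (b e + 2 / ℓ e) / a e) (Finset.mem_univ e)
      calc b e + 2 / ℓ e = a e * ((b e + 2 / ℓ e) / a e) := by
            rw [← mul_div_assoc, mul_div_cancel_left₀ _ (ha e).ne']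
        _ < a e * (Finset.univ.sup' hEu (fun e => (b e + 2 / ℓ e) / a e) + 1) :=
            mul_lt_mul_of_pos_left (by linarith) (ha e)
  have hud : ∀ e, UniqueDiffOn ℝ (Set.Icc (0:ℝ) (ℓ e)) := fun e => uniqueDiffOn_Icc (hℓ e)
  obtain ⟨K0, hK0n, hK0⟩ := exists_uniform_bound (fun e : E => isCompact_Icc) u0
    (fun e => (hu0 e).continuousOn)
  obtain ⟨Kg, hKgn, hKg⟩ := exists_uniform_bound (ι := V) (s := fun _ => Set.Icc (0:ℝ) T)
    (fun _ => isCompact_Icc) g (fun v => (hg v).continuousOn)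
  obtain ⟨D1, hD1n, hD1⟩ := exists_uniform_bound (fun e : E => isCompact_Icc)
    (fun e => derivWithin (u0 e) (Set.Icc 0 (ℓ e)))
    (fun e => (hu0 e).continuousOn_derivWithin (hud e) (by norm_num))
  obtain ⟨D2, hD2n, hD2⟩ := exists_uniform_bound (fun e : E => isCompact_Icc)
    (fun e => derivWithin (derivWithin (u0 e) (Set.Icc 0 (ℓ e))) (Set.Icc 0 (ℓ e)))
    (fun e => ((hu0 e).derivWithin (m := 1) (hud e) (by norm_num)).continuousOn_derivWithin
      (hud e) (by norm_num))
  obtain ⟨Dg, hDgn, hDg⟩ := exists_uniform_bound (ι := V) (s := fun _ => Set.Icc (0:ℝ) T)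
    (fun _ => isCompact_Icc) (fun v => derivWithin (g v) (Set.Icc 0 T))
    (fun v => (hg v).continuousOn_derivWithin (uniqueDiffOn_Icc hT) (by norm_num))
  obtain ⟨K1, hK1⟩ : ∃ K1, ∀ e, (D2 + b e * D1) / a e ≤ K1 :=
    ⟨Finset.univ.sup' hEu (fun e => (D2 + b e * D1) / a e),
      fun e => Finset.le_sup' (f := fun e => (D2 + b e * D1) / a e) (Finset.mem_univ e)⟩
  refine ⟨(max K0 Kg + L / 4 + lam * T) + (max K1 Dg + L / 4 + lam * T), ?_⟩
  intro eps heps sol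
  -- bound on |u|
  have hubound : ∀ e, ∀ x ∈ Set.Icc (0:ℝ) (ℓ e), ∀ t ∈ Set.Icc (0:ℝ) T,
      |sol.u e x t| ≤ max K0 Kg + L / 4 + lam * T := by
    apply max_principle_abs E V src tgt hne ℓ a b eps T hT hℓ ha hb heps hflow
      sol.u sol.ux sol.uxx sol.ut sol.uhat sol.cont_u sol.hasDeriv_x sol.hasDeriv_xx
      sol.hasDeriv_t sol.pde sol.vertex_continuity sol.coupling lam L K0 Kg hlam hL
    · intro e x hx
      rw [sol.init e x hx]
      exact hK0 e x hx
    · intro v hv t ht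
      rw [sol.bdry v hv t ht]
      exact hKg v t ht
  -- bound on |ut| at time zero, uniform in eps
  have hut0 : ∀ e, ∀ x ∈ Set.Icc (0:ℝ) (ℓ e), |sol.ut e x 0| ≤ K1 := by
    intro e x hx
    have h0T : (0:ℝ) ∈ Set.Icc (0:ℝ) T := ⟨le_refl 0, hT.le⟩
    have hux0 : ∀ y ∈ Set.Icc (0:ℝ) (ℓ e),
        sol.ux e y 0 = derivWithin (u0 e) (Set.Icc 0 (ℓ e)) y := by
      intro y hy
      have h := (sol.hasDeriv_x e 0 h0T y hy).congr
        (fun z hz => (sol.init e z hz).symm) (sol.init e y hy).symm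
      exact (h.derivWithin (hud e y hy)).symm
    have huxx0 : sol.uxx e x 0
        = derivWithin (derivWithin (u0 e) (Set.Icc 0 (ℓ e))) (Set.Icc 0 (ℓ e)) x := by
      have h := (sol.hasDeriv_xx e 0 h0T x hx).congr
        (fun z hz => (hux0 z hz).symm) (hux0 x hx).symm
      exact (h.derivWithin (hud e x hx)).symm
    have hpde := sol.pde e x hx 0 h0T
    have h1 : |sol.ux e x 0| ≤ D1 := by rw [hux0 x hx]; exact hD1 e x hx
    have h2 : |sol.uxx e x 0| ≤ D2 := by rw [huxx0]; exact hD2 e x hx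
    have h3 : a e * |sol.ut e x 0| ≤ D2 + b e * D1 := by
      have heq : a e * sol.ut e x 0 = eps e * sol.uxx e x 0 - b e * sol.ux e x 0 := by
        linarith
      calc a e * |sol.ut e x 0| = |a e * sol.ut e x 0| := by
            rw [abs_mul, abs_of_pos (ha e)]
        _ = |eps e * sol.uxx e x 0 - b e * sol.ux e x 0| := by rw [heq]
        _ ≤ |eps e * sol.uxx e x 0| + |b e * sol.ux e x 0| := abs_sub _ _
        _ = eps e * |sol.uxx e x 0| + b e * |sol.ux e x 0| := by
            rw [abs_mul, abs_mul, abs_of_pos (heps e).1, abs_of_pos (hb e)]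
        _ ≤ 1 * D2 + b e * D1 := by
            have g1 : eps e * |sol.uxx e x 0| ≤ 1 * D2 := by
              apply mul_le_mul (heps e).2 h2 (abs_nonneg _) one_pos.le
            have g2 : b e * |sol.ux e x 0| ≤ b e * D1 :=
              mul_le_mul_of_nonneg_left h1 (hb e).le
            linarith
        _ = D2 + b e * D1 := by ring
    have h4 : (D2 + b e * D1) / a e ≤ K1 := hK1 e
    calc |sol.ut e x 0| = (a e * |sol.ut e x 0|) / a e :=
          (mul_div_cancel_left₀ _ (ha e).ne').symm
      _ ≤ (D2 + b e * D1) / a e := (div_le_div_iff_of_pos_right (ha e)).2 h3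
      _ ≤ K1 := h4
  -- bound on |ut| for t < T, via difference quotients
  have hC2 : ∀ e, ∀ x ∈ Set.Icc (0:ℝ) (ℓ e), ∀ t, 0 ≤ t → t < T →
      |sol.ut e x t| ≤ max K1 Dg + L / 4 + lam * T := by
    intro e x hx t ht0 htT
    refine le_of_forall_pos_le_add ?_
    intro η hη
    -- uniform continuity of ut near t = 0
    obtain ⟨h0, hh0pos, hh0⟩ : ∃ h0 > 0, ∀ e', ∀ x' ∈ Set.Icc (0:ℝ) (ℓ e'),
        ∀ s ∈ Set.Icc (0:ℝ) T, |s| < h0 →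
          |sol.ut e' x' s - sol.ut e' x' 0| ≤ η / 2 := by
      have huc : ∀ e' : E, ∃ δ > 0, ∀ p ∈ (Set.Icc (0:ℝ) (ℓ e') ×ˢ Set.Icc (0:ℝ) T),
          ∀ q ∈ (Set.Icc (0:ℝ) (ℓ e') ×ˢ Set.Icc (0:ℝ) T), dist p q < δ →
            dist ((fun p : ℝ × ℝ => sol.ut e' p.1 p.2) p)
              ((fun p : ℝ × ℝ => sol.ut e' p.1 p.2) q) < η / 2 := by
        intro e'
        have h1 := (isCompact_Icc.prod isCompact_Icc).uniformContinuousOn_of_continuous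
          (sol.cont_ut e')
        exact Metric.uniformContinuousOn_iff.mp h1 (η / 2) (by positivity)
      choose δ hδpos hδ using huc
      refine ⟨Finset.univ.inf' hEu δ, ?_, ?_⟩
      · show (0:ℝ) < Finset.univ.inf' hEu δ
        rw [Finset.lt_inf'_iff]
        exact fun e' _ => hδpos e'
      · intro e' x' hx' s hs hsmall
        have hd : dist ((x', s) : ℝ × ℝ) ((x', 0) : ℝ × ℝ) < δ e' := by
          rw [Prod.dist_eq]
          have hd1 : dist x' x' = 0 := dist_self x'
          have hd2 : dist s (0:ℝ) = |s| := by rw [Real.dist_eq, sub_zero]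
          rw [hd1, hd2]
          have : |s| < Finset.univ.inf' hEu δ := hsmall
          calc max 0 |s| = |s| := max_eq_right (abs_nonneg s)
            _ < Finset.univ.inf' hEu δ := this
            _ ≤ δ e' := Finset.inf'_le _ (Finset.mem_univ e')
        have := hδ e' (x', s) (Set.mk_mem_prod hx' hs)
          (x', 0) (Set.mk_mem_prod hx' ⟨le_refl 0, hT.le⟩) hd
        rw [Real.dist_eq] at this
        exact this.le
    -- choose a small forward step h with good slope approximation
    set m := min T (t + min h0 T) with hmdef
    have hminpos : 0 < min h0 T := lt_min hh0pos hT
    have htm : t < m := lt_min htT (by linarith)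
    obtain ⟨s, hsprop, hsmem⟩ : ∃ s, |slope (fun τ => sol.u e x τ) t s - sol.ut e x t| ≤ η / 2
        ∧ s ∈ Set.Ioo t m := by
      have hder := sol.hasDeriv_t e x hx t ⟨ht0, htT.le⟩
      have hslope := hasDerivWithinAt_iff_tendsto_slope.mp hder
      have hmono : 𝓝[Set.Ioo t m] t ≤ 𝓝[Set.Icc 0 T \ {t}] t := by
        apply nhdsWithin_mono
        intro y hy
        refine ⟨⟨by linarith [hy.1], le_of_lt (lt_of_lt_of_le hy.2 (min_le_left _ _))⟩,
          fun h0' => lt_irrefl t (h0' ▸ hy.1)⟩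
      have h2 := hslope.mono_left hmono
      have hneB : (𝓝[Set.Ioo t m] t).NeBot := by
        rw [nhdsWithin_Ioo_eq_nhdsGT htm]
        infer_instance
      have hev : ∀ᶠ y in 𝓝[Set.Ioo t m] t,
          |slope (fun τ => sol.u e x τ) t y - sol.ut e x t| ≤ η / 2 := by
        have hball : Metric.ball (sol.ut e x t) (η / 2) ∈ 𝓝 (sol.ut e x t) :=
          Metric.ball_mem_nhds _ (by positivity)
        filter_upwards [h2.eventually (Filter.eventually_of_mem hball
          (fun z hz => Metric.mem_ball.mp hz))] with y hy
        rw [Real.dist_eq] at hy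
        exact hy.le
      exact (hev.and eventually_mem_nhdsWithin).exists
    set h := s - t with hhdef
    clear_value h
    have hhpos : 0 < h := by simp only [hhdef]; linarith [hsmem.1]
    have hsm : s < m := hsmem.2
    have hsT : s < T := lt_of_lt_of_le hsm (min_le_left _ _)
    have hhh0 : h < h0 := by
      have h1 : s < t + min h0 T := lt_of_lt_of_le hsm (min_le_right _ _)
      have h2 : min h0 T ≤ h0 := min_le_left _ _
      simp only [hhdef]; linarith
    have hhT : h < T := by simp only [hhdef]; linarith
    have hT' : 0 < T - h := by linarith
    -- the shifted difference quotient
    have hshift : ∀ t' ∈ Set.Icc (0:ℝ) (T - h), t' + h ∈ Set.Icc (0:ℝ) T :=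
      fun t' ht' => ⟨by linarith [ht'.1], by linarith [ht'.2]⟩
    have hsub2 : Set.Icc (0:ℝ) (T - h) ⊆ Set.Icc (0:ℝ) T :=
      Set.Icc_subset_Icc (le_refl 0) (by linarith)
    have hne0 : h ≠ 0 := ne_of_gt hhpos
    have hUq := max_principle_abs E V src tgt hne ℓ a b eps (T - h) hT' hℓ ha hb heps hflow
      (fun e' x' t' => (sol.u e' x' (t' + h) - sol.u e' x' t') / h)
      (fun e' x' t' => (sol.ux e' x' (t' + h) - sol.ux e' x' t') / h)
      (fun e' x' t' => (sol.uxx e' x' (t' + h) - sol.uxx e' x' t') / h)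
      (fun e' x' t' => (sol.ut e' x' (t' + h) - sol.ut e' x' t') / h)
      (fun v t' => (sol.uhat v (t' + h) - sol.uhat v t') / h)
      (fun e' => by
        have c1 : ContinuousOn (fun p : ℝ × ℝ => sol.u e' p.1 (p.2 + h))
            (Set.Icc 0 (ℓ e') ×ˢ Set.Icc 0 (T - h)) := by
          apply (sol.cont_u e').comp
            ((continuous_fst.prodMk (continuous_snd.add continuous_const)).continuousOn)
          intro p hp
          exact Set.mk_mem_prod hp.1 (hshift p.2 hp.2)
        have c2 : ContinuousOn (fun p : ℝ × ℝ => sol.u e' p.1 p.2)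
            (Set.Icc 0 (ℓ e') ×ˢ Set.Icc 0 (T - h)) :=
          (sol.cont_u e').mono (Set.prod_mono (subset_refl _) hsub2)
        exact (c1.sub c2).div_const h)
      (fun e' t' ht' x' hx' =>
        ((sol.hasDeriv_x e' (t' + h) (hshift t' ht') x' hx').sub
          (sol.hasDeriv_x e' t' (hsub2 ht') x' hx')).div_const h)
      (fun e' t' ht' x' hx' =>
        ((sol.hasDeriv_xx e' (t' + h) (hshift t' ht') x' hx').sub
          (sol.hasDeriv_xx e' t' (hsub2 ht') x' hx')).div_const h)
      (fun e' x' hx' t' ht' => by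
        have hinner : HasDerivWithinAt (fun s' : ℝ => s' + h) 1 (Set.Icc 0 (T - h)) t' :=
          (hasDerivWithinAt_id t' _).add_const h
        have houter := sol.hasDeriv_t e' x' hx' (t' + h) (hshift t' ht')
        have hcomp := HasDerivWithinAt.comp t' houter hinner
          (fun s' hs' => hshift s' hs')
        have hshiftd : HasDerivWithinAt (fun s' => sol.u e' x' (s' + h))
            (sol.ut e' x' (t' + h)) (Set.Icc 0 (T - h)) t' := by
          simpa [Function.comp_def] using hcomp
        exact ((hshiftd.sub ((sol.hasDeriv_t e' x' hx' t' (hsub2 ht')).mono hsub2)).div_const h))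
      (fun e' x' hx' t' ht' => by
        have p1 := sol.pde e' x' hx' (t' + h) (hshift t' ht')
        have p2 := sol.pde e' x' hx' t' (hsub2 ht')
        field_simp
        linarith)
      (fun v e' hev t' ht' => by
        rw [sol.vertex_continuity v e' hev (t' + h) (hshift t' ht'),
          sol.vertex_continuity v e' hev t' (hsub2 ht')])
      (fun v hv t' ht' => by
        have c1 := sol.coupling v hv (t' + h) (hshift t' ht')
        have c2 := sol.coupling v hv t' (hsub2 ht')
        have hexp : ∀ e', (b e' * ((sol.u e' (endCoord src ℓ e' v) (t' + h)
              - sol.u e' (endCoord src ℓ e' v) t') / h)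
            - eps e' * ((sol.ux e' (endCoord src ℓ e' v) (t' + h)
              - sol.ux e' (endCoord src ℓ e' v) t') / h)) * inc src tgt e' v
            = (((b e' * sol.u e' (endCoord src ℓ e' v) (t' + h)
              - eps e' * sol.ux e' (endCoord src ℓ e' v) (t' + h)) * inc src tgt e' v)
              - ((b e' * sol.u e' (endCoord src ℓ e' v) t'
              - eps e' * sol.ux e' (endCoord src ℓ e' v) t') * inc src tgt e' v)) / h := by
          intro e'
          field_simp
          ring
        rw [Finset.sum_congr rfl (fun e' _ => hexp e'), ← Finset.sum_div,
          Finset.sum_sub_distrib, c1, c2]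
        simp)
      lam L (K1 + η / 2) Dg hlam hL
      (fun e' x' hx' => by
        have hbound : ∀ s' ∈ Set.Icc (0:ℝ) h, |sol.ut e' x' s'| ≤ K1 + η / 2 := by
          intro s' hs'
          have hs'T : s' ∈ Set.Icc (0:ℝ) T := ⟨hs'.1, le_trans hs'.2 hhT.le⟩
          have hsm' : |s'| < h0 := by
            rw [abs_of_nonneg hs'.1]
            exact lt_of_le_of_lt hs'.2 hhh0
          have h1 := hh0 e' x' hx' s' hs'T hsm'
          have h2 := hut0 e' x' hx'
          calc |sol.ut e' x' s'|
              = |sol.ut e' x' 0 + (sol.ut e' x' s' - sol.ut e' x' 0)| := by ring_nf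
            _ ≤ |sol.ut e' x' 0| + |sol.ut e' x' s' - sol.ut e' x' 0| := abs_add_le _ _
            _ ≤ K1 + η / 2 := add_le_add h2 h1
        have hmvt : ‖sol.u e' x' h - sol.u e' x' 0‖ ≤ (K1 + η / 2) * ‖h - 0‖ := by
          apply Convex.norm_image_sub_le_of_norm_hasDerivWithin_le
            (f := fun s' => sol.u e' x' s') (f' := fun s' => sol.ut e' x' s')
            (s := Set.Icc (0:ℝ) h)
            (fun s' hs' => (sol.hasDeriv_t e' x' hx' s' ⟨hs'.1, le_trans hs'.2 hhT.le⟩).mono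
              (Set.Icc_subset_Icc (le_refl 0) hhT.le))
            (fun s' hs' => by rw [Real.norm_eq_abs]; exact hbound s' hs')
            (convex_Icc _ _) ⟨le_refl 0, hhpos.le⟩ ⟨hhpos.le, le_refl h⟩
        rw [Real.norm_eq_abs, Real.norm_eq_abs, sub_zero, abs_of_pos hhpos] at hmvt
        have hzh : (0:ℝ) + h = h := zero_add h
        calc |(sol.u e' x' (0 + h) - sol.u e' x' 0) / h|
            = |sol.u e' x' h - sol.u e' x' 0| / h := by
              rw [hzh, abs_div, abs_of_pos hhpos]
          _ ≤ ((K1 + η / 2) * h) / h := (div_le_div_iff_of_pos_right hhpos).2 hmvt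
          _ = K1 + η / 2 := by rw [mul_div_assoc, div_self hne0, mul_one])
      (fun v hv t' ht' => by
        rw [sol.bdry v hv (t' + h) (hshift t' ht'), sol.bdry v hv t' (hsub2 ht')]
        have hmvt2 : ‖g v (t' + h) - g v t'‖ ≤ Dg * ‖(t' + h) - t'‖ := by
          apply Convex.norm_image_sub_le_of_norm_hasDerivWithin_le
            (f' := derivWithin (g v) (Set.Icc 0 T)) (s := Set.Icc (0:ℝ) T)
            (fun s' hs' => (((hg v).differentiableOn (by norm_num)) s' hs').hasDerivWithinAt)
            (fun s' hs' => by rw [Real.norm_eq_abs]; exact hDg v s' hs')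
            (convex_Icc _ _) (hsub2 ht') (hshift t' ht')
        rw [Real.norm_eq_abs, Real.norm_eq_abs, add_sub_cancel_left, abs_of_pos hhpos] at hmvt2
        calc |(g v (t' + h) - g v t') / h| = |g v (t' + h) - g v t'| / h := by
              rw [abs_div, abs_of_pos hhpos]
          _ ≤ (Dg * h) / h := (div_le_div_iff_of_pos_right hhpos).2 hmvt2
          _ = Dg := by rw [mul_div_assoc, div_self hne0, mul_one])
    -- apply the bound at (x, t)
    have htmem' : t ∈ Set.Icc (0:ℝ) (T - h) := ⟨ht0, by simp only [hhdef]; linarith⟩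
    have hq := hUq e x hx t htmem'
    have hUqeq : (sol.u e x (t + h) - sol.u e x t) / h = slope (fun τ => sol.u e x τ) t s := by
      rw [slope_def_field]
      have hth : t + h = s := by simp only [hhdef]; ring
      rw [hth, hhdef]
    have htri : |sol.ut e x t| ≤ |(sol.u e x (t + h) - sol.u e x t) / h| + η / 2 := by
      rw [hUqeq]
      have h1 : |sol.ut e x t| ≤ |slope (fun τ => sol.u e x τ) t s|
          + |slope (fun τ => sol.u e x τ) t s - sol.ut e x t| := by
        have := abs_add_le (slope (fun τ => sol.u e x τ) t s)
          (sol.ut e x t - slope (fun τ => sol.u e x τ) t s)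
        have heq2 : slope (fun τ => sol.u e x τ) t s
            + (sol.ut e x t - slope (fun τ => sol.u e x τ) t s) = sol.ut e x t := by ring
        rw [heq2] at this
        calc |sol.ut e x t| ≤ |slope (fun τ => sol.u e x τ) t s|
              + |sol.ut e x t - slope (fun τ => sol.u e x τ) t s| := this
          _ = |slope (fun τ => sol.u e x τ) t s|
              + |slope (fun τ => sol.u e x τ) t s - sol.ut e x t| := by rw [abs_sub_comm]
      linarith [hsprop]
    have hmaxle : max (K1 + η / 2) Dg ≤ max K1 Dg + η / 2 := by
      apply max_le
      · exact add_le_add_left (le_max_left _ _) _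
      · linarith [le_max_right K1 Dg]
    have hlamT : lam * (T - h) ≤ lam * T := by nlinarith
    linarith
  -- bound on |ut| everywhere (including t = T, by continuity)
  have hC2' : ∀ e, ∀ x ∈ Set.Icc (0:ℝ) (ℓ e), ∀ t ∈ Set.Icc (0:ℝ) T,
      |sol.ut e x t| ≤ max K1 Dg + L / 4 + lam * T := by
    intro e x hx t ht
    rcases lt_or_eq_of_le ht.2 with hlt | heqT
    · exact hC2 e x hx t ht.1 hlt
    · subst heqT
      have hcs : ContinuousOn (fun s' => sol.ut e x s') (Set.Icc (0:ℝ) t) := by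
        apply (sol.cont_ut e).comp ((continuous_const.prodMk continuous_id).continuousOn)
        intro s' hs'
        exact Set.mk_mem_prod hx hs'
      have hcw : ContinuousWithinAt (fun s' => sol.ut e x s') (Set.Icc (0:ℝ) t) t :=
        hcs t ⟨hT.le, le_refl t⟩
      have htend : Filter.Tendsto (fun s' => |sol.ut e x s'|) (𝓝[Set.Ioo (0:ℝ) t] t)
          (𝓝 |sol.ut e x t|) :=
        ((hcw.mono Set.Ioo_subset_Icc_self).tendsto).abs
      have hneB : (𝓝[Set.Ioo (0:ℝ) t] t).NeBot := by
        rw [nhdsWithin_Ioo_eq_nhdsLT hT]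
        infer_instance
      refine le_of_tendsto htend ?_
      filter_upwards [self_mem_nhdsWithin] with s' hs'
      exact hC2 e x hx s' hs'.1.le hs'.2
  -- combine
  intro e x hx t ht
  have h1 := hubound e x hx t ht
  have h2 := hC2' e x hx t ht
  linarith
end

section
/- Uniform bound on the spatial derivative at inflow endpoints (Lemma 3.3): Under the hypotheses of Lemma 3.2, there exists a constant K, independent of the edge e ∈ E and of the diffusion coefficients ε^e ∈ (0,1], such that the classical solution u_ε of the convection–diffusion network problem satisfies |∂_x u_ε^e(0,t)| ≤ K for every edge e ∈ E (where x = 0 is the start/inflow vertex of e) and all t ∈ (0,T). The constant K can be taken as any number with K ≥ (a^e/b^e)C_u for all e, K ≥ max_{x∈E} |∂_x u₀(x)|, and K ≥ 2C_u/min_{e∈E} ℓ^e, where C_u is the uniform bound on |u_ε| + |∂_t u_ε| from Lemma 3.2. -/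
open Set Finset
open Filter Topology

/-- At a right endpoint where `f` is maximal, the one–sided derivative is nonnegative. -/
lemma deriv_nonneg_right_aux {f : ℝ → ℝ} {a b f' : ℝ} (hab : a < b)
    (hd : HasDerivWithinAt f f' (Set.Icc a b) b)
    (hmax : ∀ s ∈ Set.Icc a b, f s ≤ f b) : 0 ≤ f' := by
  have hts := hasDerivWithinAt_iff_tendsto_slope.mp hd
  rw [Set.Icc_sdiff_right] at hts
  have hne : (𝓝[Set.Ico a b] b).NeBot := by
    refine mem_closure_iff_nhdsWithin_neBot.mp ?_
    rw [closure_Ico hab.ne]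
    exact Set.right_mem_Icc.mpr hab.le
  refine ge_of_tendsto hts ?_
  filter_upwards [self_mem_nhdsWithin] with s hs
  have h1 : f s - f b ≤ 0 := sub_nonpos.mpr (hmax s (Set.Ico_subset_Icc_self hs))
  have h2 : b - s > 0 := sub_pos.mpr hs.2
  have : slope f b s = (f b - f s) / (b - s) := by
    rw [slope_def_field]
    rw [div_eq_div_iff (by linarith) (by linarith)]
    ring
  rw [this]
  exact div_nonneg (by linarith) h2.le

/-- If the difference quotients at the left endpoint are bounded by `C`, so is the
one–sided derivative. -/
lemma deriv_le_of_slope_le_aux {f : ℝ → ℝ} {L f' C : ℝ} (hL : 0 < L)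
    (hd : HasDerivWithinAt f f' (Set.Icc 0 L) 0)
    (hs : ∀ x ∈ Set.Icc 0 L, f x - f 0 ≤ C * x) : f' ≤ C := by
  have hts := hasDerivWithinAt_iff_tendsto_slope.mp hd
  rw [Set.Icc_diff_left] at hts
  have hne : (𝓝[Set.Ioc (0:ℝ) L] 0).NeBot := by
    refine mem_closure_iff_nhdsWithin_neBot.mp ?_
    rw [closure_Ioc hL.ne]
    exact Set.left_mem_Icc.mpr hL.le
  refine le_of_tendsto hts ?_
  filter_upwards [self_mem_nhdsWithin] with x hx
  rw [slope_def_field, sub_zero, div_le_iff₀ hx.1]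
  exact (hs x (Set.Ioc_subset_Icc_self hx)).trans (le_of_eq (by ring))

/-- Weak maximum principle on a rectangle for `a ∂ₜ + b ∂ₓ - ε ∂ₓₓ` with strictly
negative source. -/
lemma rect_max_principle (L T : ℝ) (hL : 0 < L) (hT : 0 ≤ T)
    (w wx wxx wt : ℝ → ℝ → ℝ)
    (hc : ContinuousOn (fun p : ℝ × ℝ => w p.1 p.2) (Set.Icc 0 L ×ˢ Set.Icc 0 T))
    (hx : ∀ t ∈ Set.Icc (0:ℝ) T, ∀ x ∈ Set.Icc (0:ℝ) L,
      HasDerivWithinAt (fun y => w y t) (wx x t) (Set.Icc 0 L) x)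
    (hxx : ∀ t ∈ Set.Icc (0:ℝ) T, ∀ x ∈ Set.Icc (0:ℝ) L,
      HasDerivWithinAt (fun y => wx y t) (wxx x t) (Set.Icc 0 L) x)
    (ht : ∀ x ∈ Set.Icc (0:ℝ) L, ∀ t ∈ Set.Icc (0:ℝ) T,
      HasDerivWithinAt (fun s => w x s) (wt x t) (Set.Icc 0 T) t)
    (a b eps : ℝ) (ha : 0 < a) (heps : 0 < eps)
    (hop : ∀ x ∈ Set.Icc (0:ℝ) L, ∀ t ∈ Set.Icc (0:ℝ) T,
      a * wt x t + b * wx x t - eps * wxx x t < 0)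
    (h0 : ∀ x ∈ Set.Icc (0:ℝ) L, w x 0 ≤ 0)
    (hleft : ∀ t ∈ Set.Icc (0:ℝ) T, w 0 t ≤ 0)
    (hright : ∀ t ∈ Set.Icc (0:ℝ) T, w L t ≤ 0) :
    ∀ x ∈ Set.Icc (0:ℝ) L, ∀ t ∈ Set.Icc (0:ℝ) T, w x t ≤ 0 := by
  set S : Set (ℝ × ℝ) := Set.Icc 0 L ×ˢ Set.Icc 0 T with hS
  have hScpt : IsCompact S := (isCompact_Icc).prod isCompact_Icc
  have hSne : S.Nonempty := ⟨(0, 0), by constructor <;> exact ⟨le_refl _, by positivity⟩⟩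
  obtain ⟨p, hpS, hpmax⟩ := hScpt.exists_isMaxOn hSne hc
  have hmax : ∀ q ∈ S, w q.1 q.2 ≤ w p.1 p.2 := fun q hq => hpmax hq
  intro x hxm t htm
  have hxt : w x t ≤ w p.1 p.2 := hmax (x, t) ⟨hxm, htm⟩
  by_contra hcon
  push_neg at hcon
  have hpos : 0 < w p.1 p.2 := lt_of_lt_of_le hcon hxt
  obtain ⟨⟨hx0, hxL⟩, ht0, htT⟩ := hpS
  set x₀ := p.1
  set t₀ := p.2
  have hx0' : 0 < x₀ := by
    rcases eq_or_lt_of_le hx0 with h | h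
    · exact absurd hpos (not_lt.mpr (by rw [← h] at *; exact hleft t₀ ⟨ht0, htT⟩))
    · exact h
  have hxL' : x₀ < L := by
    rcases eq_or_lt_of_le hxL with h | h
    · exact absurd hpos (not_lt.mpr (by rw [h] at *; exact hright t₀ ⟨ht0, htT⟩))
    · exact h
  have ht0' : 0 < t₀ := by
    rcases eq_or_lt_of_le ht0 with h | h
    · exact absurd hpos (not_lt.mpr (by rw [← h] at *; exact h0 x₀ ⟨hx0, hxL⟩))
    · exact h
  have hx₀m : x₀ ∈ Set.Icc (0:ℝ) L := ⟨hx0, hxL⟩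
  have ht₀m : t₀ ∈ Set.Icc (0:ℝ) T := ⟨ht0, htT⟩
  have hwt : 0 ≤ wt x₀ t₀ := by
    refine deriv_nonneg_right_aux ht0' (((ht x₀ hx₀m t₀ ht₀m).mono ?_)) ?_
    · exact Set.Icc_subset_Icc le_rfl htT
    · intro s hs
      exact hmax (x₀, s) ⟨hx₀m, hs.1, hs.2.trans htT⟩
  have hIccnhds : Set.Icc (0:ℝ) L ∈ 𝓝 x₀ := Icc_mem_nhds hx0' hxL'
  have hdx : HasDerivAt (fun y => w y t₀) (wx x₀ t₀) x₀ :=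
    (hx t₀ ht₀m x₀ hx₀m).hasDerivAt hIccnhds
  have hlm : IsLocalMax (fun y => w y t₀) x₀ := by
    filter_upwards [hIccnhds] with y hy
    exact hmax (y, t₀) ⟨hy, ht₀m⟩
  have hwx : wx x₀ t₀ = 0 := hlm.hasDerivAt_eq_zero hdx
  have hwxx : 0 < wxx x₀ t₀ := by
    by_contra hno
    push_neg at hno
    have h1 := hop x₀ hx₀m t₀ ht₀m
    rw [hwx] at h1
    nlinarith [mul_nonneg ha.le hwt, mul_nonpos_of_nonneg_of_nonpos heps.le hno]
  have hdxx : HasDerivAt (fun y => wx y t₀) (wxx x₀ t₀) x₀ :=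
    (hxx t₀ ht₀m x₀ hx₀m).hasDerivAt hIccnhds
  have hts := hasDerivAt_iff_tendsto_slope.mp hdxx
  have hev : ∀ᶠ y in 𝓝[≠] x₀, 0 < slope (fun y => wx y t₀) x₀ y :=
    hts.eventually (eventually_gt_nhds hwxx)
  have hev' : ∀ᶠ y in 𝓝[>] x₀, 0 < wx y t₀ := by
    have := hev.filter_mono (nhdsWithin_mono x₀ (fun y hy => ne_of_gt hy))
    filter_upwards [this, self_mem_nhdsWithin] with y hy hy'
    have h2 : 0 < y - x₀ := sub_pos.mpr hy'
    have hy2 := hy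
    rw [slope_def_field, hwx, sub_zero] at hy2
    have := mul_pos hy2 h2
    rwa [div_mul_cancel₀] at this
    exact h2.ne'
  obtain ⟨u, hu, hsub⟩ := mem_nhdsGT_iff_exists_Ioc_subset.mp hev'
  set c := min u L with hc'
  have hcx : x₀ < c := lt_min hu hxL'
  have hcL : c ≤ L := min_le_right _ _
  have hcs : Set.Icc x₀ c ⊆ Set.Icc (0:ℝ) L :=
    Set.Icc_subset_Icc hx0'.le hcL
  have hcont : ContinuousOn (fun y => w y t₀) (Set.Icc x₀ c) := by
    intro y hy
    exact ((hx t₀ ht₀m y (hcs hy)).continuousWithinAt).mono hcs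
  have hderivpos : ∀ y ∈ Set.Ioo x₀ c, 0 < deriv (fun z => w z t₀) y := by
    intro y hy
    have hym : y ∈ Set.Icc (0:ℝ) L := hcs ⟨hy.1.le, hy.2.le⟩
    have hnd : HasDerivAt (fun z => w z t₀) (wx y t₀) y :=
      (hx t₀ ht₀m y hym).hasDerivAt
        (Icc_mem_nhds (hx0'.trans hy.1) (lt_of_lt_of_le hy.2 hcL))
    rw [hnd.deriv]
    exact hsub ⟨hy.1, hy.2.le.trans (min_le_left _ _)⟩
  have hsm : StrictMonoOn (fun y => w y t₀) (Set.Icc x₀ c) :=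
    strictMonoOn_of_deriv_pos (convex_Icc _ _) hcont (by rwa [interior_Icc])
  have hlt := hsm (Set.left_mem_Icc.mpr hcx.le) (Set.right_mem_Icc.mpr hcx.le) hcx
  have hle : w c t₀ ≤ w x₀ t₀ := hmax (c, t₀) ⟨hcs (Set.right_mem_Icc.mpr hcx.le), ht₀m⟩
  simp only at hlt
  linarith



/-- One–sided barrier estimate at the inflow endpoint `x = 0` of an edge. -/
lemma one_sided_bound
    (E V : Type) [Fintype E] [Fintype V] [DecidableEq E] [DecidableEq V]
    (src tgt : E → V) (ℓ a b eps : E → ℝ) (T : ℝ) (hT : 0 < T)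
    (u0 : E → ℝ → ℝ) (g : V → ℝ → ℝ)
    (sol : CDSol E V src tgt ℓ a b eps T u0 g)
    (e : E) (hℓ : 0 < ℓ e) (ha : 0 < a e) (hb : 0 < b e) (heps : 0 < eps e)
    (Cu K : ℝ)
    (hCu : ∀ x ∈ Set.Icc (0:ℝ) (ℓ e), ∀ t ∈ Set.Icc (0:ℝ) T,
      |sol.u e x t| + |sol.ut e x t| ≤ Cu)
    (hK1 : a e * Cu ≤ b e * K)
    (hK2 : ∀ x ∈ Set.Icc (0:ℝ) (ℓ e), |u0 e x - u0 e 0| ≤ K * x)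
    (hK3 : 2 * Cu ≤ K * ℓ e)
    (σ : ℝ) (hσ : σ = 1 ∨ σ = -1)
    (t : ℝ) (ht : t ∈ Set.Icc (0:ℝ) T) :
    σ * sol.ux e 0 t ≤ K := by
  set L := ℓ e with hLdef
  have h0m : (0:ℝ) ∈ Set.Icc (0:ℝ) L := Set.left_mem_Icc.mpr hℓ.le
  refine le_of_forall_pos_le_add ?_
  intro δ hδ
  set K' := K + δ with hK'def
  -- barrier functions
  set w : ℝ → ℝ → ℝ := fun x s => σ * (sol.u e x s - sol.u e 0 s) - K' * x with hwdef
  set wx : ℝ → ℝ → ℝ := fun x s => σ * sol.ux e x s - K' with hwxdef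
  set wxx : ℝ → ℝ → ℝ := fun x s => σ * sol.uxx e x s with hwxxdef
  set wt : ℝ → ℝ → ℝ := fun x s => σ * (sol.ut e x s - sol.ut e 0 s) with hwtdef
  have hwle : ∀ x ∈ Set.Icc (0:ℝ) L, ∀ s ∈ Set.Icc (0:ℝ) T, w x s ≤ 0 := by
    refine rect_max_principle L T hℓ hT.le w wx wxx wt ?_ ?_ ?_ ?_
      (a e) (b e) (eps e) ha heps ?_ ?_ ?_ ?_
    · -- continuity
      have c1 := sol.cont_u e
      have c2 : ContinuousOn (fun p : ℝ × ℝ => sol.u e 0 p.2)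
          (Set.Icc 0 L ×ˢ Set.Icc 0 T) := by
        refine c1.comp ((continuous_const.prodMk continuous_snd).continuousOn) ?_
        intro p hp
        exact ⟨h0m, hp.2⟩
      exact ((continuousOn_const.mul (c1.sub c2)).sub
        (continuousOn_const.mul (continuous_fst.continuousOn)))
    · intro s hsm x hxm
      have hlin : HasDerivWithinAt (fun y : ℝ => K' * y) K' (Set.Icc 0 L) x := by
        simpa using ((hasDerivAt_id x).const_mul K').hasDerivWithinAt
      exact (((sol.hasDeriv_x e s hsm x hxm).sub_const (sol.u e 0 s)).const_mul σ).sub hlin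
    · intro s hsm x hxm
      exact ((sol.hasDeriv_xx e s hsm x hxm).const_mul σ).sub_const K'
    · intro x hxm s hsm
      exact (((sol.hasDeriv_t e x hxm s hsm).sub
        (sol.hasDeriv_t e 0 h0m s hsm)).const_mul σ).sub_const (K' * x)
    · -- the differential operator is strictly negative on the barrier
      intro x hxm s hsm
      have hp := sol.pde e x hxm s hsm
      have habs := hCu 0 h0m s hsm
      have h1 : |sol.ut e 0 s| ≤ Cu := by
        have := abs_nonneg (sol.u e 0 s); linarith
      have h2 := abs_le.mp h1
      have hkey : a e * wt x s + b e * wx x s - eps e * wxx x s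
          = σ * (a e * sol.ut e x s + b e * sol.ux e x s - eps e * sol.uxx e x s)
            - σ * (a e * sol.ut e 0 s) - b e * K' := by
        simp only [hwtdef, hwxdef, hwxxdef]; ring
      rw [hkey]
      have hz : a e * sol.ut e x s + b e * sol.ux e x s - eps e * sol.uxx e x s = 0 := by
        linarith
      rw [hz, mul_zero, zero_sub]
      have hbδ : 0 < b e * δ := mul_pos hb hδ
      rcases hσ with rfl | rfl
      · nlinarith [mul_le_mul_of_nonneg_left h2.2 ha.le]
      · nlinarith [mul_le_mul_of_nonneg_left h2.1 ha.le]
    · -- initial time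
      intro x hxm
      have hi := sol.init e x hxm
      have hi0 := sol.init e 0 h0m
      have h2 := abs_le.mp (hK2 x hxm)
      have hx0 : 0 ≤ x := hxm.1
      simp only [hwdef, hi, hi0]
      rcases hσ with rfl | rfl
      · nlinarith
      · nlinarith
    · intro s hsm
      simp [hwdef]
    · -- right endpoint
      intro s hsm
      have hbL := hCu L (Set.right_mem_Icc.mpr hℓ.le) s hsm
      have hb0 := hCu 0 h0m s hsm
      have h1 : |sol.u e L s| ≤ Cu := by
        have := abs_nonneg (sol.ut e L s); linarith
      have h0' : |sol.u e 0 s| ≤ Cu := by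
        have := abs_nonneg (sol.ut e 0 s); linarith
      have h2 := abs_le.mp h1
      have h3 := abs_le.mp h0'
      have hδL : 0 ≤ δ * L := le_of_lt (mul_pos hδ hℓ)
      simp only [hwdef]
      rcases hσ with rfl | rfl
      · nlinarith
      · nlinarith
  -- conclude via the difference quotient at x = 0
  have hd : HasDerivWithinAt (fun x => σ * sol.u e x t) (σ * sol.ux e 0 t)
      (Set.Icc 0 L) 0 := (sol.hasDeriv_x e t ht 0 h0m).const_mul σ
  refine deriv_le_of_slope_le_aux hℓ hd ?_
  intro x hxm
  have h := hwle x hxm t ht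
  simp only [hwdef] at h
  have hring : σ * sol.u e x t - σ * sol.u e 0 t = σ * (sol.u e x t - sol.u e 0 t) := by ring
  rw [hring]
  linarith

/-- **Lemma 3.3 (uniform bound on the spatial derivative at inflow endpoints).**
Under the hypotheses of Lemma 3.2, with `C_u` the uniform bound on `|u_ε| + |∂ₜ u_ε|`:
there is a constant `K`, independent of the edge and of the diffusion coefficients
`ε ∈ (0,1]`, with `|∂ₓ u_ε^e(0,t)| ≤ K` for every edge `e` and all `t ∈ (0,T)`;
moreover any `K` with `K ≥ (aᵉ/bᵉ)C_u` for all `e`, `K ≥ max |∂ₓ u₀|` and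
`K ≥ 2 C_u / min ℓᵉ` works. -/
theorem cd_inflow_derivative_bound
    (E V : Type) [Fintype E] [Fintype V] [DecidableEq E] [DecidableEq V] [Nonempty E]
    (src tgt : E → V) (hne : ∀ e, src e ≠ tgt e)
    (ℓ a b : E → ℝ) (T : ℝ) (hT : 0 < T)
    (hℓ : ∀ e, 0 < ℓ e) (ha : ∀ e, 0 < a e) (hb : ∀ e, 0 < b e)
    (hdeg : ∀ v : V, 1 ≤ edgeDeg src tgt v)
    (hflow : ∀ v : V, 2 ≤ edgeDeg src tgt v → ∑ e, b e * inc src tgt e v = 0)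
    (u0 : E → ℝ → ℝ) (hu0 : ∀ e, ContDiffOn ℝ 2 (u0 e) (Set.Icc 0 (ℓ e)))
    (uhat0 : V → ℝ)
    (hu0cont : ∀ (v : V) (e : E), (src e = v ∨ tgt e = v) →
      u0 e (endCoord src ℓ e v) = uhat0 v)
    (g : V → ℝ → ℝ) (hg : ∀ v, ContDiffOn ℝ 2 (g v) (Set.Icc 0 T))
    (hcompat : ∀ v : V, edgeDeg src tgt v = 1 → g v 0 = uhat0 v)
    (Cu : ℝ)
    (hCu : ∀ eps : E → ℝ, (∀ e, 0 < eps e ∧ eps e ≤ 1) →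
      ∀ sol : CDSol E V src tgt ℓ a b eps T u0 g,
        ∀ e, ∀ x ∈ Set.Icc (0 : ℝ) (ℓ e), ∀ t ∈ Set.Icc (0 : ℝ) T,
          |sol.u e x t| + |sol.ut e x t| ≤ Cu) :
    (∃ K : ℝ, ∀ eps : E → ℝ, (∀ e, 0 < eps e ∧ eps e ≤ 1) →
      ∀ sol : CDSol E V src tgt ℓ a b eps T u0 g,
        ∀ e, ∀ t ∈ Set.Ioo (0 : ℝ) T, |sol.ux e 0 t| ≤ K) ∧
    (∀ K : ℝ, (∀ e, a e / b e * Cu ≤ K) →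
      (∀ e, ∀ x ∈ Set.Icc (0 : ℝ) (ℓ e),
        |derivWithin (u0 e) (Set.Icc 0 (ℓ e)) x| ≤ K) →
      (∀ e, 2 * Cu / ℓ e ≤ K) →
      ∀ eps : E → ℝ, (∀ e, 0 < eps e ∧ eps e ≤ 1) →
        ∀ sol : CDSol E V src tgt ℓ a b eps T u0 g,
          ∀ e, ∀ t ∈ Set.Ioo (0 : ℝ) T, |sol.ux e 0 t| ≤ K) := by
  have main : ∀ K : ℝ, (∀ e, a e / b e * Cu ≤ K) →
      (∀ e, ∀ x ∈ Set.Icc (0 : ℝ) (ℓ e),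
        |derivWithin (u0 e) (Set.Icc 0 (ℓ e)) x| ≤ K) →
      (∀ e, 2 * Cu / ℓ e ≤ K) →
      ∀ eps : E → ℝ, (∀ e, 0 < eps e ∧ eps e ≤ 1) →
        ∀ sol : CDSol E V src tgt ℓ a b eps T u0 g,
          ∀ e, ∀ t ∈ Set.Ioo (0 : ℝ) T, |sol.ux e 0 t| ≤ K := by
    intro K hK1 hK2 hK3 eps heps sol e t ht
    have htm : t ∈ Set.Icc (0:ℝ) T := ⟨ht.1.le, ht.2.le⟩
    have hCup : ∀ x ∈ Set.Icc (0:ℝ) (ℓ e), ∀ s ∈ Set.Icc (0:ℝ) T,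
        |sol.u e x s| + |sol.ut e x s| ≤ Cu := fun x hx s hs =>
      hCu eps heps sol e x hx s hs
    have hK1' : a e * Cu ≤ b e * K := by
      have h := hK1 e
      rw [div_mul_eq_mul_div, div_le_iff₀ (hb e)] at h
      linarith
    have hK2' : ∀ x ∈ Set.Icc (0:ℝ) (ℓ e), |u0 e x - u0 e 0| ≤ K * x := by
      intro x hx
      have hdiff : DifferentiableOn ℝ (u0 e) (Set.Icc 0 (ℓ e)) :=
        (hu0 e).differentiableOn (by norm_num)
      have hbd : ∀ y ∈ Set.Icc (0:ℝ) (ℓ e),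
          ‖derivWithin (u0 e) (Set.Icc 0 (ℓ e)) y‖ ≤ K := by
        intro y hy; simpa using hK2 e y hy
      have h0m : (0:ℝ) ∈ Set.Icc (0:ℝ) (ℓ e) := Set.left_mem_Icc.mpr (hℓ e).le
      have := (convex_Icc (0:ℝ) (ℓ e)).norm_image_sub_le_of_norm_derivWithin_le
        hdiff hbd h0m hx
      simpa [Real.norm_eq_abs, abs_of_nonneg hx.1] using this
    have hK3' : 2 * Cu ≤ K * ℓ e := by
      have h := hK3 e
      rw [div_le_iff₀ (hℓ e)] at h
      linarith
    have hpos := one_sided_bound E V src tgt ℓ a b eps T hT u0 g sol e (hℓ e)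
      (ha e) (hb e) (heps e).1 Cu K hCup hK1' hK2' hK3' 1 (Or.inl rfl) t htm
    have hneg := one_sided_bound E V src tgt ℓ a b eps T hT u0 g sol e (hℓ e)
      (ha e) (hb e) (heps e).1 Cu K hCup hK1' hK2' hK3' (-1) (Or.inr rfl) t htm
    rw [one_mul] at hpos
    rw [neg_one_mul] at hneg
    exact abs_le.mpr ⟨by linarith, hpos⟩
  have hMe : ∀ e : E, ∃ Me : ℝ, ∀ x ∈ Set.Icc (0:ℝ) (ℓ e),
      |derivWithin (u0 e) (Set.Icc 0 (ℓ e)) x| ≤ Me := by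
    intro e
    have hud : UniqueDiffOn ℝ (Set.Icc (0:ℝ) (ℓ e)) := uniqueDiffOn_Icc (hℓ e)
    have hcd : ContinuousOn (derivWithin (u0 e) (Set.Icc 0 (ℓ e)))
        (Set.Icc (0:ℝ) (ℓ e)) := (hu0 e).continuousOn_derivWithin hud (by norm_num)
    have hne : (Set.Icc (0:ℝ) (ℓ e)).Nonempty := ⟨0, Set.left_mem_Icc.mpr (hℓ e).le⟩
    obtain ⟨z, hz, hzmax⟩ := isCompact_Icc.exists_isMaxOn hne hcd.abs
    exact ⟨|derivWithin (u0 e) (Set.Icc 0 (ℓ e)) z|, fun x hx => hzmax hx⟩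
  choose M hM using hMe
  set K₀ : ℝ := Finset.univ.sup' Finset.univ_nonempty
    (fun e => max (a e / b e * Cu) (max (M e) (2 * Cu / ℓ e))) with hK₀
  have hsup : ∀ e : E, max (a e / b e * Cu) (max (M e) (2 * Cu / ℓ e)) ≤ K₀ := by
    intro e
    exact Finset.le_sup' (fun e => max (a e / b e * Cu) (max (M e) (2 * Cu / ℓ e)))
      (Finset.mem_univ e)
  have hc1 : ∀ e, a e / b e * Cu ≤ K₀ := fun e =>
    le_trans (le_max_left _ _) (hsup e)
  have hc2 : ∀ e, ∀ x ∈ Set.Icc (0:ℝ) (ℓ e),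
      |derivWithin (u0 e) (Set.Icc 0 (ℓ e)) x| ≤ K₀ := fun e x hx =>
    le_trans (hM e x hx) (le_trans (le_trans (le_max_left _ _) (le_max_right _ _)) (hsup e))
  have hc3 : ∀ e, 2 * Cu / ℓ e ≤ K₀ := fun e =>
    le_trans (le_trans (le_max_right _ _) (le_max_right _ _)) (hsup e)
  exact ⟨⟨K₀, main K₀ hc1 hc2 hc3⟩, main⟩
end

section
/- Dissipativity of the convection–diffusion network operator (estimate (2.19) in the proof of Theorem 2.1): Let z = (z^e) with each z^e : [0,ℓ^e] → ℝ twice continuously differentiable, such that z is continuous across vertices (for each vertex v there is ẑ^v with z^e(v) = ẑ^v for all e ∈ E(v)), ẑ^v = 0 at every boundary vertex v ∈ V∂, and ∑_{e∈E(v)} (b^e z^e(v) − ε^e ∂_x z^e(v)) n^e(v) = 0 at every inner vertex v ∈ V₀. Then ∑_{e∈E} ∫₀^{ℓ^e} ( −b^e ∂_x z^e(x) + ε^e ∂_xx z^e(x) ) z^e(x) dx ≤ − ∑_{e∈E} ε^e ∫₀^{ℓ^e} (∂_x z^e(x))² dx ≤ 0. -/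
open Set Finset

/-- **Dissipativity of the convection–diffusion network operator** (estimate (2.19) in
the proof of Theorem 2.1).  For `z` twice continuously differentiable on each edge,
continuous across vertices, vanishing at boundary vertices and satisfying the coupling
condition at inner vertices,
`∑ₑ ∫₀^{ℓᵉ} (−bᵉ ∂ₓzᵉ + εᵉ ∂ₓₓzᵉ) zᵉ dx ≤ −∑ₑ εᵉ ∫₀^{ℓᵉ} (∂ₓzᵉ)² dx ≤ 0`. -/
theorem cd_operator_dissipative
    (E V : Type) [Fintype E] [Fintype V] [DecidableEq E] [DecidableEq V]
    (src tgt : E → V) (hne : ∀ e, src e ≠ tgt e)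
    (ℓ b eps : E → ℝ)
    (hℓ : ∀ e, 0 < ℓ e) (hb : ∀ e, 0 < b e) (heps : ∀ e, 0 < eps e)
    (hdeg : ∀ v : V, 1 ≤ edgeDeg src tgt v)
    (hflow : ∀ v : V, 2 ≤ edgeDeg src tgt v → ∑ e, b e * inc src tgt e v = 0)
    (z zx zxx : E → ℝ → ℝ)
    (hz : ∀ e, ∀ x ∈ Set.Icc (0 : ℝ) (ℓ e),
      HasDerivWithinAt (z e) (zx e x) (Set.Icc 0 (ℓ e)) x)
    (hzx : ∀ e, ∀ x ∈ Set.Icc (0 : ℝ) (ℓ e),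
      HasDerivWithinAt (zx e) (zxx e x) (Set.Icc 0 (ℓ e)) x)
    (hzxx : ∀ e, ContinuousOn (zxx e) (Set.Icc 0 (ℓ e)))
    (zhat : V → ℝ)
    (hcont : ∀ (v : V) (e : E), (src e = v ∨ tgt e = v) → z e (endCoord src ℓ e v) = zhat v)
    (hbdry : ∀ v : V, edgeDeg src tgt v = 1 → zhat v = 0)
    (hcoupling : ∀ v : V, 2 ≤ edgeDeg src tgt v →
      ∑ e, (b e * z e (endCoord src ℓ e v) - eps e * zx e (endCoord src ℓ e v))
        * inc src tgt e v = 0) :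
    (∑ e, ∫ x in (0 : ℝ)..(ℓ e), (-(b e) * zx e x + eps e * zxx e x) * z e x)
        ≤ -∑ e, eps e * ∫ x in (0 : ℝ)..(ℓ e), (zx e x) ^ 2 ∧
      (-∑ e, eps e * ∫ x in (0 : ℝ)..(ℓ e), (zx e x) ^ 2) ≤ 0 := by
  -- continuity of z and zx on each edge
  have hzc : ∀ e, ContinuousOn (z e) (Set.Icc 0 (ℓ e)) :=
    fun e x hx => (hz e x hx).continuousWithinAt
  have hzxc : ∀ e, ContinuousOn (zx e) (Set.Icc 0 (ℓ e)) :=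
    fun e x hx => (hzx e x hx).continuousWithinAt
  set G : E → ℝ → ℝ := fun e x => eps e * (zx e x * z e x) - b e / 2 * (z e x) ^ 2 with hGdef
  -- FTC on each edge
  have key : ∀ e, (∫ x in (0:ℝ)..(ℓ e),
      ((-(b e) * zx e x + eps e * zxx e x) * z e x + eps e * (zx e x) ^ 2))
      = G e (ℓ e) - G e 0 := by
    intro e
    have hint : IntervalIntegrable
        (fun x => (-(b e) * zx e x + eps e * zxx e x) * z e x + eps e * (zx e x) ^ 2)
        MeasureTheory.volume 0 (ℓ e) := by
      apply ContinuousOn.intervalIntegrable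
      rw [Set.uIcc_of_le (hℓ e).le]
      exact ((((continuousOn_const.mul (hzxc e)).add
        (continuousOn_const.mul (hzxx e))).mul (hzc e)).add
        (continuousOn_const.mul ((hzxc e).pow 2)))
    apply intervalIntegral.integral_eq_sub_of_hasDeriv_right_of_le (hℓ e).le _ _ hint
    · exact (continuousOn_const.mul ((hzxc e).mul (hzc e))).sub
        (continuousOn_const.mul ((hzc e).pow 2))
    · intro x hx
      have hx' : x ∈ Set.Icc (0:ℝ) (ℓ e) := Set.Ioo_subset_Icc_self hx
      have h1 := hz e x hx'
      have h2 := hzx e x hx'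
      have hd : HasDerivWithinAt (G e)
          ((-(b e) * zx e x + eps e * zxx e x) * z e x + eps e * (zx e x) ^ 2)
          (Set.Icc 0 (ℓ e)) x := by
        have := ((h2.mul h1).const_mul (eps e)).sub ((h1.pow 2).const_mul (b e / 2))
        refine this.congr_deriv ?_
        push_cast
        ring
      exact hd.mono_of_mem_nhdsWithin (Icc_mem_nhdsGT_of_mem ⟨hx.1.le, hx.2⟩)
  -- split the integral
  have split : ∀ e, (∫ x in (0:ℝ)..(ℓ e), (-(b e) * zx e x + eps e * zxx e x) * z e x)
      = G e (ℓ e) - G e 0 - eps e * ∫ x in (0:ℝ)..(ℓ e), (zx e x) ^ 2 := by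
    intro e
    have hi1 : IntervalIntegrable (fun x => (-(b e) * zx e x + eps e * zxx e x) * z e x)
        MeasureTheory.volume 0 (ℓ e) := by
      apply ContinuousOn.intervalIntegrable
      rw [Set.uIcc_of_le (hℓ e).le]
      exact (((continuousOn_const.mul (hzxc e)).add
        (continuousOn_const.mul (hzxx e))).mul (hzc e))
    have hi2 : IntervalIntegrable (fun x => eps e * (zx e x) ^ 2)
        MeasureTheory.volume 0 (ℓ e) := by
      apply ContinuousOn.intervalIntegrable
      rw [Set.uIcc_of_le (hℓ e).le]
      exact continuousOn_const.mul ((hzxc e).pow 2)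
    have h := intervalIntegral.integral_add hi1 hi2
    rw [key e] at h
    rw [intervalIntegral.integral_const_mul] at h
    linarith [h]
  -- the boundary sum vanishes
  have hB : ∑ e, (G e (ℓ e) - G e 0) = 0 := by
    have step1 : ∀ e : E, G e (ℓ e) - G e 0
        = ∑ v, inc src tgt e v * G e (endCoord src ℓ e v) := by
      intro e
      have hsub : ({src e, tgt e} : Finset V) ⊆ Finset.univ := Finset.subset_univ _
      have hvanish : ∀ v ∈ (Finset.univ : Finset V), v ∉ ({src e, tgt e} : Finset V) →
          inc src tgt e v * G e (endCoord src ℓ e v) = 0 := by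
        intro v _ hv
        simp only [Finset.mem_insert, Finset.mem_singleton] at hv
        push_neg at hv
        simp [inc, Ne.symm hv.1, Ne.symm hv.2]
      rw [← Finset.sum_subset hsub hvanish, Finset.sum_pair (hne e)]
      simp [inc, endCoord, hne e, (hne e).symm]
      ring
    rw [Finset.sum_congr rfl (fun e _ => step1 e), Finset.sum_comm]
    apply Finset.sum_eq_zero
    intro v _
    set c : E → ℝ := fun e => endCoord src ℓ e v with hc
    -- incident edges satisfy z e (c e) = zhat v, others have inc = 0
    have hinc0 : ∀ e : E, ¬(src e = v ∨ tgt e = v) → inc src tgt e v = 0 := by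
      intro e h
      push_neg at h
      simp [inc, h.1, h.2]
    have termrw : ∀ e : E, inc src tgt e v * G e (c e)
        = zhat v * (eps e * zx e (c e) * inc src tgt e v)
          - zhat v ^ 2 / 2 * (b e * inc src tgt e v) := by
      intro e
      by_cases h : src e = v ∨ tgt e = v
      · have hz0 : z e (c e) = zhat v := hcont v e h
        simp only [hGdef, hc]
        rw [hz0]
        ring
      · rw [hinc0 e h]
        ring
    rw [Finset.sum_congr rfl (fun e _ => termrw e), Finset.sum_sub_distrib,
      ← Finset.mul_sum, ← Finset.mul_sum]
    rcases Nat.lt_or_ge (edgeDeg src tgt v) 2 with hdv | hdv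
    · have h1 : edgeDeg src tgt v = 1 := le_antisymm (by omega) (hdeg v)
      rw [hbdry v h1]
      ring
    · have hS2 : ∑ e, b e * inc src tgt e v = 0 := hflow v hdv
      have hS1 : ∑ e, eps e * zx e (c e) * inc src tgt e v = 0 := by
        have hcp := hcoupling v hdv
        have hbz : ∀ e : E, (b e * z e (c e) - eps e * zx e (c e)) * inc src tgt e v
            = zhat v * (b e * inc src tgt e v) - eps e * zx e (c e) * inc src tgt e v := by
          intro e
          by_cases h : src e = v ∨ tgt e = v
          · rw [show z e (c e) = zhat v from hcont v e h]; ring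
          · rw [hinc0 e h]; ring
        rw [Finset.sum_congr rfl (fun e _ => hbz e), Finset.sum_sub_distrib,
          ← Finset.mul_sum, hS2] at hcp
        linarith [hcp]
      rw [hS1, hS2]
      ring
  -- conclude
  have hmain : (∑ e, ∫ x in (0:ℝ)..(ℓ e), (-(b e) * zx e x + eps e * zxx e x) * z e x)
      = -∑ e, eps e * ∫ x in (0:ℝ)..(ℓ e), (zx e x) ^ 2 := by
    rw [Finset.sum_congr rfl (fun e _ => split e), Finset.sum_sub_distrib, hB]
    ring
  have hnn : (0:ℝ) ≤ ∑ e, eps e * ∫ x in (0:ℝ)..(ℓ e), (zx e x) ^ 2 := by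
    apply Finset.sum_nonneg
    intro e _
    exact mul_nonneg (heps e).le
      (intervalIntegral.integral_nonneg (hℓ e).le (fun x _ => sq_nonneg _))
  exact ⟨le_of_eq hmain, neg_nonpos_of_nonneg hnn⟩
end

section
/- Dissipativity of the transport network operator (Step 2 of the proof of Theorem 2.2): Let z = (z^e) with each z^e : [0,ℓ^e] → ℝ continuously differentiable, and suppose there are nodal values ẑ^v for each vertex v ∉ V∂^out such that z^e(0) = ẑ^v for every edge e starting at v, that ∑_{e∈E^in(v)} b^e z^e(v) = (∑_{e∈E^out(v)} b^e) ẑ^v at every inner vertex v ∈ V₀, and that ẑ^v = 0 at every inflow boundary vertex v ∈ V∂^in. Then − ∑_{e∈E} ∫₀^{ℓ^e} b^e (∂_x z^e(x)) z^e(x) dx ≤ − (1/2) ∑_{v∈V∂^out} b^{e(v)} (z^{e(v)}(v))² ≤ 0, where e(v) is the unique edge incident to the outflow boundary vertex v. -/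
open Set Finset

/-- **Dissipativity of the transport network operator** (Step 2 of the proof of
Theorem 2.2).  For `z` continuously differentiable on each edge, with nodal values
`ẑ` at the inflow endpoints, transport coupling at the inner vertices and `ẑ = 0` at
inflow boundary vertices,
`−∑ₑ ∫₀^{ℓᵉ} bᵉ (∂ₓzᵉ) zᵉ dx ≤ −(1/2) ∑_{v ∈ V∂ᵒᵘᵗ} bᵉ (zᵉ(v))² ≤ 0`. -/
theorem transport_operator_dissipative
    (E V : Type) [Fintype E] [Fintype V] [DecidableEq E] [DecidableEq V]
    (src tgt : E → V) (hne : ∀ e, src e ≠ tgt e)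
    (ℓ b : E → ℝ) (hℓ : ∀ e, 0 < ℓ e) (hb : ∀ e, 0 < b e)
    (hdeg : ∀ v : V, 1 ≤ edgeDeg src tgt v)
    (hinout : ∀ v : V, 2 ≤ edgeDeg src tgt v → (∃ e, tgt e = v) ∧ (∃ e, src e = v))
    (hflow : ∀ v : V, 2 ≤ edgeDeg src tgt v →
      ∑ e ∈ Finset.univ.filter (fun e => tgt e = v), b e
        = ∑ e ∈ Finset.univ.filter (fun e => src e = v), b e)
    (z zx : E → ℝ → ℝ)
    (hz : ∀ e, ∀ x ∈ Set.Icc (0 : ℝ) (ℓ e),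
      HasDerivWithinAt (z e) (zx e x) (Set.Icc 0 (ℓ e)) x)
    (hzx : ∀ e, ContinuousOn (zx e) (Set.Icc 0 (ℓ e)))
    (zhat : V → ℝ)
    (hin : ∀ e, z e 0 = zhat (src e))
    (hcoupling : ∀ v : V, 2 ≤ edgeDeg src tgt v →
      ∑ e ∈ Finset.univ.filter (fun e => tgt e = v), b e * z e (ℓ e)
        = (∑ e ∈ Finset.univ.filter (fun e => src e = v), b e) * zhat v)
    (hbdry_in : ∀ v : V, edgeDeg src tgt v = 1 → (∃ e, src e = v) → zhat v = 0)
    (eOf : V → E)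
    (heOf : ∀ v : V, edgeDeg src tgt v = 1 → (src (eOf v) = v ∨ tgt (eOf v) = v)) :
    (-∑ e, ∫ x in (0 : ℝ)..(ℓ e), b e * zx e x * z e x)
        ≤ -(1 / 2 : ℝ) * ∑ v ∈ Finset.univ.filter
            (fun v : V => edgeDeg src tgt v = 1 ∧ tgt (eOf v) = v),
            b (eOf v) * (z (eOf v) (ℓ (eOf v))) ^ 2 ∧
      (-(1 / 2 : ℝ) * ∑ v ∈ Finset.univ.filter
          (fun v : V => edgeDeg src tgt v = 1 ∧ tgt (eOf v) = v),
          b (eOf v) * (z (eOf v) (ℓ (eOf v))) ^ 2) ≤ 0 := by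
  classical
  have hSnn : (0:ℝ) ≤ ∑ v ∈ Finset.univ.filter
      (fun v : V => edgeDeg src tgt v = 1 ∧ tgt (eOf v) = v),
      b (eOf v) * (z (eOf v) (ℓ (eOf v))) ^ 2 :=
    Finset.sum_nonneg fun v _ => mul_nonneg (hb _).le (sq_nonneg _)
  have hnn : ∀ (s : Finset E) (f : E → ℝ), (0:ℝ) ≤ ∑ e ∈ s, b e * (f e) ^ 2 :=
    fun s f => Finset.sum_nonneg fun e _ => mul_nonneg (hb _).le (sq_nonneg _)
  -- compute the integrals
  have hint : ∀ e, (∫ x in (0:ℝ)..(ℓ e), b e * zx e x * z e x)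
      = (b e * z e (ℓ e) ^ 2 - b e * z e 0 ^ 2) / 2 := by
    intro e
    have hcz : ContinuousOn (z e) (Set.Icc 0 (ℓ e)) :=
      fun x hx => (hz e x hx).continuousWithinAt
    have hderiv : ∀ x ∈ Set.Ioo (0:ℝ) (ℓ e),
        HasDerivAt (fun x => b e / 2 * z e x ^ 2) (b e * zx e x * z e x) x := by
      intro x hx
      have hmem : Set.Icc (0:ℝ) (ℓ e) ∈ nhds x := Icc_mem_nhds hx.1 hx.2
      have h1 : HasDerivAt (z e) (zx e x) x :=
        (hz e x (Set.mem_Icc_of_Ioo hx)).hasDerivAt hmem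
      have h2 := (h1.pow 2).const_mul (b e / 2)
      refine h2.congr_deriv ?_
      ring
    have hcont : ContinuousOn (fun x => b e * zx e x * z e x) (Set.Icc 0 (ℓ e)) :=
      (continuousOn_const.mul (hzx e)).mul hcz
    have hInt : IntervalIntegrable (fun x => b e * zx e x * z e x)
        MeasureTheory.volume 0 (ℓ e) := hcont.intervalIntegrable_of_Icc (hℓ e).le
    have hcg : ContinuousOn (fun x => b e / 2 * z e x ^ 2) (Set.Icc 0 (ℓ e)) :=
      continuousOn_const.mul (hcz.pow 2)
    have := intervalIntegral.integral_eq_sub_of_hasDerivAt_of_le (hℓ e).le hcg hderiv hInt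
    rw [this]; ring
  have hsum : (∑ e, ∫ x in (0:ℝ)..(ℓ e), b e * zx e x * z e x)
      = ((∑ e, b e * z e (ℓ e) ^ 2) - ∑ e, b e * z e 0 ^ 2) / 2 := by
    rw [Finset.sum_congr rfl fun e _ => hint e, ← Finset.sum_div,
      Finset.sum_sub_distrib]
  -- group the boundary terms by vertices
  have hAl : (∑ e, b e * z e (ℓ e) ^ 2)
      = ∑ v, ∑ e ∈ Finset.univ.filter (fun e => tgt e = v), b e * z e (ℓ e) ^ 2 :=
    (Finset.sum_fiberwise_of_maps_to (fun e _ => Finset.mem_univ (tgt e)) _).symm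
  have hA0 : (∑ e, b e * z e 0 ^ 2)
      = ∑ v, (∑ e ∈ Finset.univ.filter (fun e => src e = v), b e) * zhat v ^ 2 := by
    rw [← Finset.sum_fiberwise_of_maps_to (fun e _ => Finset.mem_univ (src e))
      (fun e => b e * z e 0 ^ 2)]
    refine Finset.sum_congr rfl fun v _ => ?_
    rw [Finset.sum_mul]
    refine Finset.sum_congr rfl fun e he => ?_
    have hse : src e = v := (Finset.mem_filter.mp he).2
    rw [hin e, hse]
  -- the key per-vertex inequality
  have key : ∀ v : V,
      (∑ e ∈ Finset.univ.filter (fun e => src e = v), b e) * zhat v ^ 2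
        + (if edgeDeg src tgt v = 1 ∧ tgt (eOf v) = v then
            b (eOf v) * z (eOf v) (ℓ (eOf v)) ^ 2 else 0)
      ≤ ∑ e ∈ Finset.univ.filter (fun e => tgt e = v), b e * z e (ℓ e) ^ 2 := by
    intro v
    rcases eq_or_lt_of_le (hdeg v) with hd1 | hd2
    · -- degree one: boundary vertex
      have hd1 : edgeDeg src tgt v = 1 := hd1.symm
      have hsingle : Finset.univ.filter (fun e => src e = v ∨ tgt e = v) = {eOf v} := by
        have hcard : (Finset.univ.filter (fun e => src e = v ∨ tgt e = v)).card = 1 := hd1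
        obtain ⟨a, ha⟩ := Finset.card_eq_one.mp hcard
        have hmem : eOf v ∈ Finset.univ.filter (fun e => src e = v ∨ tgt e = v) := by
          simp [heOf v hd1]
        rw [ha] at hmem ⊢
        simp only [Finset.mem_singleton] at hmem
        rw [hmem]
      rcases heOf v hd1 with hsrc | htgt
      · -- inflow boundary vertex
        have hzv : zhat v = 0 := hbdry_in v hd1 ⟨eOf v, hsrc⟩
        have hif : ¬ (edgeDeg src tgt v = 1 ∧ tgt (eOf v) = v) := by
          rintro ⟨-, h⟩; exact hne (eOf v) (hsrc.trans h.symm)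
        rw [hzv, if_neg hif]
        simpa using hnn _ _
      · -- outflow boundary vertex
        have hsrcempty : Finset.univ.filter (fun e : E => src e = v) = ∅ := by
          rw [Finset.eq_empty_iff_forall_notMem]
          intro e he
          have hse : src e = v := (Finset.mem_filter.mp he).2
          have hemem : e ∈ Finset.univ.filter (fun e => src e = v ∨ tgt e = v) := by
            simp [hse]
          rw [hsingle, Finset.mem_singleton] at hemem
          rw [hemem] at hse
          exact hne (eOf v) (hse.trans htgt.symm)
        have htgtset : Finset.univ.filter (fun e : E => tgt e = v) = {eOf v} := by
          apply Finset.Subset.antisymm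
          · intro e he
            have hte : tgt e = v := (Finset.mem_filter.mp he).2
            have hemem : e ∈ Finset.univ.filter (fun e => src e = v ∨ tgt e = v) := by
              simp [hte]
            rw [hsingle] at hemem
            exact hemem
          · intro e he
            rw [Finset.mem_singleton] at he
            subst he
            simp [htgt]
        rw [hsrcempty, htgtset, if_pos ⟨hd1, htgt⟩]
        simp
    · -- inner vertex: degree at least two
      have hd2' : 2 ≤ edgeDeg src tgt v := hd2
      rw [if_neg (by rintro ⟨h1, -⟩; omega), add_zero]
      have hBpos : 0 < ∑ e ∈ Finset.univ.filter (fun e : E => src e = v), b e := by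
        obtain ⟨-, ⟨eo, heo⟩⟩ := hinout v hd2'
        exact Finset.sum_pos (fun e _ => hb e) ⟨eo, by simp [heo]⟩
      have hcs := Finset.sum_mul_sq_le_sq_mul_sq
        (Finset.univ.filter (fun e : E => tgt e = v))
        (fun e => Real.sqrt (b e)) (fun e => Real.sqrt (b e) * z e (ℓ e))
      have h1 : ∀ e : E, Real.sqrt (b e) * (Real.sqrt (b e) * z e (ℓ e))
          = b e * z e (ℓ e) := by
        intro e
        rw [← mul_assoc, Real.mul_self_sqrt (hb e).le]
      have h2 : ∀ e : E, Real.sqrt (b e) ^ 2 = b e :=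
        fun e => Real.sq_sqrt (hb e).le
      have h3 : ∀ e : E, (Real.sqrt (b e) * z e (ℓ e)) ^ 2 = b e * z e (ℓ e) ^ 2 := by
        intro e
        rw [mul_pow, h2]
      simp only [Finset.sum_congr rfl fun e _ => h1 e] at hcs
      rw [Finset.sum_congr rfl fun e (_ : e ∈ _) => h2 e,
        Finset.sum_congr rfl fun e (_ : e ∈ _) => h3 e,
        hcoupling v hd2', hflow v hd2'] at hcs
      nlinarith [hcs, hBpos,
        hnn (Finset.univ.filter (fun e : E => tgt e = v)) (fun e => z e (ℓ e))]
  have hkeysum :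
      (∑ e, b e * z e 0 ^ 2) + (∑ v ∈ Finset.univ.filter
        (fun v : V => edgeDeg src tgt v = 1 ∧ tgt (eOf v) = v),
        b (eOf v) * (z (eOf v) (ℓ (eOf v))) ^ 2)
      ≤ ∑ e, b e * z e (ℓ e) ^ 2 := by
    rw [hA0, hAl, Finset.sum_filter, ← Finset.sum_add_distrib]
    exact Finset.sum_le_sum fun v _ => key v
  constructor
  · rw [hsum]; linarith
  · linarith
end

section
/- Barrier bound on each edge (key step in the proof of Lemma 3.3): Under the hypotheses of Lemma 3.2, let C_u be the uniform bound with |u_ε^e(x,t)| + |∂_t u_ε^e(x,t)| ≤ C_u and let K be any constant with K ≥ (a^e/b^e)C_u for all e ∈ E, K ≥ max_{x∈E} |∂_x u₀(x)|, and K ≥ 2C_u / min_{e∈E} ℓ^e. Then the classical solution u_ε of the convection–diffusion network problem satisfies u_ε^e(x,t) − û_ε^{v_i^e}(t) ≤ K x for all x ∈ [0,ℓ^e], all edges e ∈ E, and all t ∈ [0,T], where v_i^e is the start vertex of e and û_ε^{v_i^e}(t) = u_ε^e(0,t) the common nodal value there. -/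
open Set Finset Filter Topology

lemma aux_time_nonneg {g : ℝ → ℝ} {c T t0 : ℝ} (ht0 : t0 ∈ Set.Icc 0 T)
    (ht0pos : 0 < t0) (hd : HasDerivWithinAt g c (Set.Icc 0 T) t0)
    (hmax : ∀ t ∈ Set.Icc 0 T, g t ≤ g t0) : 0 ≤ c := by
  have hloc : IsLocalMaxOn g (Set.Icc 0 T) t0 :=
    eventually_mem_nhdsWithin.mono fun t htm => hmax t htm
  have hseg : segment ℝ t0 0 ⊆ Set.Icc 0 T := by
    rw [segment_symm, segment_eq_Icc ht0pos.le]
    exact Set.Icc_subset_Icc_right ht0.2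
  have hy : (0:ℝ) - t0 ∈ posTangentConeAt (Set.Icc 0 T) t0 :=
    sub_mem_posTangentConeAt_of_segment_subset hseg
  have h := hloc.hasFDerivWithinAt_nonpos hd.hasFDerivWithinAt hy
  simp only [ContinuousLinearMap.toSpanSingleton_apply,
    smul_eq_mul] at h
  nlinarith

lemma aux_no_interior_max {f fx : ℝ → ℝ} {L x0 c : ℝ}
    (hx0 : x0 ∈ Set.Ioo 0 L)
    (hdf : ∀ x ∈ Set.Icc 0 L, HasDerivWithinAt f (fx x) (Set.Icc 0 L) x)
    (hc : 0 < c)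
    (hd2 : HasDerivWithinAt fx c (Set.Icc 0 L) x0)
    (hfx0 : fx x0 = 0)
    (hmax : ∀ x ∈ Set.Icc 0 L, f x ≤ f x0) : False := by
  have hIccnhds : Set.Icc 0 L ∈ 𝓝 x0 := Icc_mem_nhds hx0.1 hx0.2
  have hd2' : HasDerivAt fx c x0 := hd2.hasDerivAt hIccnhds
  have hslope := hasDerivAt_iff_tendsto_slope.mp hd2'
  have hslope' : Filter.Tendsto (slope fx x0) (𝓝[>] x0) (𝓝 c) :=
    hslope.mono_left (nhdsWithin_mono _ fun y hy => ne_of_gt hy)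
  have hev : ∀ᶠ y in 𝓝[>] x0, 0 < slope fx x0 y :=
    hslope'.eventually (eventually_gt_nhds hc)
  obtain ⟨x1, hx1, hsub⟩ := mem_nhdsGT_iff_exists_Ioo_subset.mp hev
  set m := min x1 L with hm
  have hx0m : x0 < m := lt_min hx1 hx0.2
  set x2 := (x0 + m)/2 with hx2
  have hx2mem : x2 ∈ Set.Ioo x0 m := ⟨by simp only [hx2]; linarith, by simp only [hx2]; linarith⟩
  have hx2Icc : x2 ∈ Set.Icc 0 L :=
    ⟨le_of_lt (lt_trans hx0.1 hx2mem.1), le_of_lt (lt_of_lt_of_le hx2mem.2 (min_le_right _ _))⟩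
  have hcont : ContinuousOn f (Set.Icc x0 x2) := fun y hy =>
    ((hdf y ⟨le_trans hx0.1.le hy.1, le_trans hy.2 hx2Icc.2⟩).continuousWithinAt).mono
      (Set.Icc_subset_Icc (le_of_lt hx0.1) hx2Icc.2)
  have hmono : StrictMonoOn f (Set.Icc x0 x2) := by
    apply strictMonoOn_of_deriv_pos (convex_Icc _ _) hcont
    intro y hy
    rw [interior_Icc] at hy
    have hyIcc : y ∈ Set.Icc 0 L :=
      ⟨le_of_lt (lt_trans hx0.1 hy.1),
       le_of_lt (lt_of_lt_of_le (lt_trans hy.2 hx2mem.2) (min_le_right _ _))⟩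
    have hyIoo : y ∈ Set.Ioo 0 L := ⟨lt_trans hx0.1 hy.1,
      lt_of_lt_of_le (lt_trans hy.2 hx2mem.2) (min_le_right _ _)⟩
    have hdy : HasDerivAt f (fx y) y :=
      (hdf y hyIcc).hasDerivAt (Icc_mem_nhds hyIoo.1 hyIoo.2)
    rw [hdy.deriv]
    have hyIoo1 : y ∈ Set.Ioo x0 x1 :=
      ⟨hy.1, lt_of_lt_of_le (lt_trans hy.2 hx2mem.2) (min_le_left _ _)⟩
    have hsl : 0 < slope fx x0 y := hsub hyIoo1
    rw [slope_def_field] at hsl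
    have hyx0 : 0 < y - x0 := by linarith [hy.1]
    rw [div_pos_iff] at hsl
    rcases hsl with ⟨h1, _⟩ | ⟨_, h2⟩
    · rw [hfx0, sub_zero] at h1; exact h1
    · linarith
  have hlt : f x0 < f x2 := hmono (Set.left_mem_Icc.mpr hx2mem.1.le)
    (Set.right_mem_Icc.mpr hx2mem.1.le) hx2mem.1
  exact absurd (hmax x2 hx2Icc) (not_le.mpr hlt)


/-- **Barrier bound on each edge** (key step in the proof of Lemma 3.3).  Under the
hypotheses of Lemma 3.2, if `C_u` bounds `|u_ε| + |∂ₜu_ε|` and `K` satisfies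
`K ≥ (aᵉ/bᵉ)C_u` for all edges, `K ≥ max |∂ₓu₀|` and `K ≥ 2C_u/min ℓᵉ`, then
`u_εᵉ(x,t) − û_ε^{vᵢᵉ}(t) ≤ K x` for all `x ∈ [0,ℓᵉ]`, all edges `e` and all
`t ∈ [0,T]`, where `vᵢᵉ = src e` is the start vertex of `e`. -/
theorem cd_barrier_bound
    (E V : Type) [Fintype E] [Fintype V] [DecidableEq E] [DecidableEq V]
    (src tgt : E → V) (hne : ∀ e, src e ≠ tgt e)
    (ℓ a b eps : E → ℝ) (T : ℝ) (hT : 0 < T)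
    (hℓ : ∀ e, 0 < ℓ e) (ha : ∀ e, 0 < a e) (hb : ∀ e, 0 < b e)
    (heps : ∀ e, 0 < eps e ∧ eps e ≤ 1)
    (hdeg : ∀ v : V, 1 ≤ edgeDeg src tgt v)
    (hflow : ∀ v : V, 2 ≤ edgeDeg src tgt v → ∑ e, b e * inc src tgt e v = 0)
    (u0 : E → ℝ → ℝ) (hu0 : ∀ e, ContDiffOn ℝ 2 (u0 e) (Set.Icc 0 (ℓ e)))
    (uhat0 : V → ℝ)
    (hu0cont : ∀ (v : V) (e : E), (src e = v ∨ tgt e = v) →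
      u0 e (endCoord src ℓ e v) = uhat0 v)
    (g : V → ℝ → ℝ) (hg : ∀ v, ContDiffOn ℝ 2 (g v) (Set.Icc 0 T))
    (hcompat : ∀ v : V, edgeDeg src tgt v = 1 → g v 0 = uhat0 v)
    (sol : CDSol E V src tgt ℓ a b eps T u0 g)
    (Cu : ℝ)
    (hCu : ∀ e, ∀ x ∈ Set.Icc (0 : ℝ) (ℓ e), ∀ t ∈ Set.Icc (0 : ℝ) T,
      |sol.u e x t| + |sol.ut e x t| ≤ Cu)
    (K : ℝ)
    (hK1 : ∀ e, a e / b e * Cu ≤ K)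
    (hK2 : ∀ e, ∀ x ∈ Set.Icc (0 : ℝ) (ℓ e),
      |derivWithin (u0 e) (Set.Icc 0 (ℓ e)) x| ≤ K)
    (hK3 : ∀ e, 2 * Cu / ℓ e ≤ K) :
    ∀ e, ∀ x ∈ Set.Icc (0 : ℝ) (ℓ e), ∀ t ∈ Set.Icc (0 : ℝ) T,
      sol.u e x t - sol.uhat (src e) t ≤ K * x := by
  intro e x hx t ht
  have hLpos := hℓ e
  have h0mem : (0:ℝ) ∈ Set.Icc 0 (ℓ e) := ⟨le_refl 0, hLpos.le⟩
  have h0T : (0:ℝ) ∈ Set.Icc 0 T := ⟨le_refl 0, hT.le⟩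
  have hK0 : 0 ≤ K := le_trans (abs_nonneg _) (hK2 e 0 h0mem)
  have habs_u : ∀ x' ∈ Set.Icc 0 (ℓ e), ∀ t' ∈ Set.Icc 0 T, |sol.u e x' t'| ≤ Cu := by
    intro x' hx' t' ht'
    have h1 := hCu e x' hx' t' ht'
    have h2 := abs_nonneg (sol.ut e x' t')
    linarith
  have habs_ut : ∀ x' ∈ Set.Icc 0 (ℓ e), ∀ t' ∈ Set.Icc 0 T, |sol.ut e x' t'| ≤ Cu := by
    intro x' hx' t' ht'
    have h1 := hCu e x' hx' t' ht'
    have h2 := abs_nonneg (sol.u e x' t')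
    linarith
  have hhat : sol.uhat (src e) t = sol.u e 0 t := by
    have h := sol.vertex_continuity (src e) e (Or.inl rfl) t ht
    rw [endCoord, if_pos rfl] at h
    exact h.symm
  rw [hhat]
  suffices hsuff : ∀ δ : ℝ, 0 < δ → sol.u e x t - sol.u e 0 t - K * x ≤ δ * T by
    have hall : ∀ ε : ℝ, 0 < ε → sol.u e x t - sol.u e 0 t ≤ K * x + ε := by
      intro ε hε
      have h := hsuff (ε / T) (div_pos hε hT)
      rw [div_mul_cancel₀ _ hT.ne'] at h
      linarith
    linarith [le_of_forall_pos_le_add hall]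
  intro δ hδ
  set Q : Set (ℝ × ℝ) := Set.Icc 0 (ℓ e) ×ˢ Set.Icc 0 T with hQdef
  set Z : ℝ × ℝ → ℝ :=
    fun p => sol.u e p.1 p.2 - sol.u e 0 p.2 - K * p.1 - δ * p.2 with hZdef
  have hQc : IsCompact Q := isCompact_Icc.prod isCompact_Icc
  have hQne : Q.Nonempty := ⟨(0,0), ⟨h0mem, h0T⟩⟩
  have hcont2 : ContinuousOn (fun p : ℝ × ℝ => sol.u e 0 p.2) Q := by
    have heq : (fun p : ℝ × ℝ => sol.u e 0 p.2)
        = (fun p : ℝ × ℝ => sol.u e p.1 p.2) ∘ (fun p : ℝ × ℝ => ((0:ℝ), p.2)) := rfl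
    rw [heq]
    exact (sol.cont_u e).comp
      (Continuous.continuousOn (by fun_prop)) (fun p hp => ⟨h0mem, hp.2⟩)
  have hZcont : ContinuousOn Z Q :=
    (((sol.cont_u e).sub hcont2).sub
      ((continuous_const.mul continuous_fst).continuousOn)).sub
      ((continuous_const.mul continuous_snd).continuousOn)
  obtain ⟨⟨x0, t0⟩, hp0Q, hp0max⟩ := hQc.exists_isMaxOn hQne hZcont
  have hx0 : x0 ∈ Set.Icc 0 (ℓ e) := hp0Q.1
  have ht0 : t0 ∈ Set.Icc 0 T := hp0Q.2
  have hmax : ∀ p ∈ Q, Z p ≤ Z (x0, t0) := fun p hp => hp0max hp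
  have hZ0 : Z (x0, t0) ≤ 0 := by
    rcases eq_or_lt_of_le hx0.1 with h0x | h0x
    · -- x0 = 0
      simp only [hZdef, ← h0x]
      have : sol.u e 0 t0 - sol.u e 0 t0 - K * 0 - δ * t0 = -(δ * t0) := by ring
      rw [this]
      have := mul_nonneg hδ.le ht0.1
      linarith
    rcases eq_or_lt_of_le hx0.2 with hxL | hxL
    · -- x0 = ℓ e
      have h1 := abs_le.mp (habs_u (ℓ e) (Set.right_mem_Icc.mpr hLpos.le) t0 ht0)
      have h2 := abs_le.mp (habs_u 0 h0mem t0 ht0)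
      have h3 : 2 * Cu ≤ K * ℓ e := by
        have := hK3 e
        rw [div_le_iff₀ hLpos] at this
        linarith
      simp only [hZdef, hxL]
      have := mul_nonneg hδ.le ht0.1
      linarith [h1.2, h2.1]
    rcases eq_or_lt_of_le ht0.1 with h0t | h0t
    · -- t0 = 0
      have hder : ∀ y ∈ Set.Icc 0 (ℓ e),
          HasDerivWithinAt (fun z => sol.u e z 0) (sol.ux e y 0) (Set.Icc 0 (ℓ e)) y :=
        fun y hy => sol.hasDeriv_x e 0 h0T y hy
      have hbound : ∀ y ∈ Set.Icc 0 (ℓ e), ‖sol.ux e y 0‖ ≤ K := by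
        intro y hy
        have hu0d : HasDerivWithinAt (u0 e) (sol.ux e y 0) (Set.Icc 0 (ℓ e)) y :=
          (hder y hy).congr (fun z hz => (sol.init e z hz).symm) (sol.init e y hy).symm
        have hdw := hu0d.derivWithin ((uniqueDiffOn_Icc hLpos) y hy)
        rw [Real.norm_eq_abs, ← hdw]
        exact hK2 e y hy
      have hmvt := (convex_Icc (0:ℝ) (ℓ e)).norm_image_sub_le_of_norm_hasDerivWithin_le
        hder hbound h0mem hx0
      rw [Real.norm_eq_abs, Real.norm_eq_abs, sub_zero, abs_of_nonneg hx0.1] at hmvt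
      have h2 := (abs_le.mp hmvt).2
      simp only [hZdef, ← h0t]
      linarith
    · -- interior case: contradiction
      exfalso
      set f : ℝ → ℝ := fun y => Z (y, t0) with hfdef
      have hfd : ∀ y ∈ Set.Icc 0 (ℓ e),
          HasDerivWithinAt f (sol.ux e y t0 - K) (Set.Icc 0 (ℓ e)) y := by
        intro y hy
        have h1 := sol.hasDeriv_x e t0 ht0 y hy
        have h := ((h1.sub_const (sol.u e 0 t0)).sub
          ((hasDerivWithinAt_id y (Set.Icc 0 (ℓ e))).const_mul K)).sub_const (δ * t0)
        simpa [hfdef, hZdef] using h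
      have hfmax : ∀ y ∈ Set.Icc 0 (ℓ e), f y ≤ f x0 :=
        fun y hy => hmax (y, t0) ⟨hy, ht0⟩
      have hIcc : Set.Icc 0 (ℓ e) ∈ 𝓝 x0 := Icc_mem_nhds h0x hxL
      have hfd0 : HasDerivAt f (sol.ux e x0 t0 - K) x0 := (hfd x0 hx0).hasDerivAt hIcc
      have hlocmax : IsLocalMax f x0 :=
        Filter.eventually_of_mem hIcc (fun y hy => hfmax y hy)
      have hux : sol.ux e x0 t0 = K := by
        have := hlocmax.hasDerivAt_eq_zero hfd0
        linarith
      -- time derivative nonnegative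
      have hgd : HasDerivWithinAt (fun s => Z (x0, s))
          (sol.ut e x0 t0 - sol.ut e 0 t0 - δ) (Set.Icc 0 T) t0 := by
        have h1 := sol.hasDeriv_t e x0 hx0 t0 ht0
        have h2 := sol.hasDeriv_t e 0 h0mem t0 ht0
        have h3 : HasDerivWithinAt (fun s : ℝ => δ * s) δ (Set.Icc 0 T) t0 := by
          simpa using (hasDerivWithinAt_id t0 (Set.Icc 0 T)).const_mul δ
        have h := ((h1.sub h2).sub_const (K * x0)).sub h3
        have heq : (fun s => Z (x0, s))
            = fun s => sol.u e x0 s - sol.u e 0 s - K * x0 - δ * s := rfl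
        rw [heq]
        exact h
      have htd : 0 ≤ sol.ut e x0 t0 - sol.ut e 0 t0 - δ :=
        aux_time_nonneg ht0 h0t hgd (fun s hs => hmax (x0, s) ⟨hx0, hs⟩)
      -- positivity of uxx at max point
      have hbK : a e * Cu ≤ b e * K := by
        have h := hK1 e
        rw [div_mul_eq_mul_div, div_le_iff₀ (hb e)] at h
        linarith
      have hut0 := (abs_le.mp (habs_ut 0 h0mem t0 ht0)).1
      have hpde := sol.pde e x0 hx0 t0 ht0
      rw [hux] at hpde
      have huxxpos : 0 < sol.uxx e x0 t0 := by
        by_contra hcon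
        push_neg at hcon
        have h1 : eps e * sol.uxx e x0 t0 ≤ 0 :=
          mul_nonpos_of_nonneg_of_nonpos (heps e).1.le hcon
        have h2 : a e * (-Cu + δ) ≤ a e * sol.ut e x0 t0 :=
          mul_le_mul_of_nonneg_left (by linarith) (ha e).le
        have h3 := mul_pos (ha e) hδ
        nlinarith
      have hd2 : HasDerivWithinAt (fun y => sol.ux e y t0 - K)
          (sol.uxx e x0 t0) (Set.Icc 0 (ℓ e)) x0 :=
        (sol.hasDeriv_xx e t0 ht0 x0 hx0).sub_const K
      exact aux_no_interior_max ⟨h0x, hxL⟩ hfd huxxpos hd2 (by rw [hux, sub_self]) hfmax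
  have hZxt := hmax (x, t) ⟨hx, ht⟩
  have hfin : sol.u e x t - sol.u e 0 t - K * x - δ * t ≤ 0 := le_trans hZxt hZ0
  have hδt : δ * t ≤ δ * T := mul_le_mul_of_nonneg_left ht.2 hδ.le
  linarith
end
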